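/- arXiv:2101.06936 — 3 statements merged into one kernel-verified Lean document; each statement's English description precedes it below -/
import Mathlib

section
/- Let (X_n) be a Markov chain on ℝ^d with initial distribution γ₀ and transition kernel P satisfying W₁(Pⁿ(x,·), Pⁿ(y,·)) ≤ D κⁿ |x−y| for all n and all x,y, with D ≥ 1 and κ ∈ (0,1), and suppose sup_{n≥0} (E|X_n|^q)^{1/q} ≤ 1 for some q > 1. Let μ be the invariant measure. Then for every α ∈ (0,1] and every bounded α-Hölder continuous function f : ℝ^d → ℂ, and every n ∈ ℕ, |E f(X_n) − μ(f)| ≤ 2 D^α κ^{αn} Hol_α(f), where Hol_α(f) = sup_{x≠y} |f(x)−f(y)|/|x−y|^α. -/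
open MeasureTheory ProbabilityTheory Real

/-- The 1-Wasserstein distance with respect to a cost `ρ`:
infimum over couplings with integrable cost of the integral of the cost. -/
noncomputable def W1 {β : Type*} [MeasurableSpace β] (ρ : β → β → ℝ)
    (μ ν : Measure β) : ℝ :=
  sInf { c | ∃ pi : Measure (β × β), IsProbabilityMeasure pi ∧
    pi.map Prod.fst = μ ∧ pi.map Prod.snd = ν ∧
    Integrable (fun p => ρ p.1 p.2) pi ∧ c = ∫ p, ρ p.1 p.2 ∂pi }

/-- `n`-fold iteration of a Markov kernel. -/
noncomputable def kIter {β : Type*} [MeasurableSpace β] (P : Kernel β β) : ℕ → Kernel β β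
  | 0 => Kernel.id
  | n + 1 => P ∘ₖ kIter P n

/-- `(X n)` is a time-homogeneous Markov chain with transition kernel `P`
under the probability measure `Pr`. -/
structure IsMarkovChain {Ω β : Type*} [MeasurableSpace Ω] [MeasurableSpace β]
    (Pr : Measure Ω) (P : Kernel β β) (X : ℕ → Ω → β) : Prop where
  meas : ∀ n, Measurable (X n)
  markov : ∀ (n : ℕ) (g : (Fin (n + 1) → β) → ℝ) (f : β → ℝ),
    Measurable g → Measurable f →
    (∃ Cg, ∀ v, |g v| ≤ Cg) → (∃ Cf, ∀ x, |f x| ≤ Cf) →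
    ∫ ω, g (fun i => X i ω) * f (X (n + 1) ω) ∂Pr
      = ∫ ω, g (fun i => X i ω) * (∫ y, f y ∂(P (X n ω))) ∂Pr

/-- The empirical measure `μ_n = n⁻¹ ∑_{i=1}^n δ_{X_i}`. -/
noncomputable def empMeas {Ω β : Type*} [MeasurableSpace β] (X : ℕ → Ω → β)
    (n : ℕ) (ω : Ω) : Measure β :=
  (n : ENNReal)⁻¹ • ∑ i ∈ Finset.Icc 1 n, Measure.dirac (X i ω)

-- ===================== auxiliary lemmas =====================
section AuxLemmas

open scoped ENNReal

variable {β : Type*} [MeasurableSpace β]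

instance kIter_markov (P : Kernel β β) [IsMarkovKernel P] (n : ℕ) :
    IsMarkovKernel (kIter P n) := by
  induction n with
  | zero => rw [kIter]; infer_instance
  | succ n ih => rw [kIter]; infer_instance

lemma jensen_lintegral (ν : Measure β) [IsProbabilityMeasure ν] {g : β → ℝ≥0∞}
    (hg : AEMeasurable g ν) {r : ℝ} (hr : 0 ≤ r) (hr1 : r ≤ 1) :
    ∫⁻ x, g x ^ r ∂ν ≤ (∫⁻ x, g x ∂ν) ^ r := by
  have h := ENNReal.lintegral_mul_norm_pow_le (μ := ν) hg
    (aemeasurable_const (b := (1 : ℝ≥0∞))) hr (by linarith : (0:ℝ) ≤ 1 - r) (by ring)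
  simpa using h

lemma lintegral_le_one_of_rpow_le_one (ν : Measure β) [IsProbabilityMeasure ν] {g : β → ℝ≥0∞}
    (hg : AEMeasurable g ν) {q : ℝ} (hq : 1 ≤ q) (h : ∫⁻ x, g x ^ q ∂ν ≤ 1) :
    ∫⁻ x, g x ∂ν ≤ 1 := by
  have hq0 : 0 < q := lt_of_lt_of_le one_pos hq
  have h1q : (0:ℝ) ≤ 1 / q := by positivity
  have h1q' : 1 / q ≤ 1 := by rw [div_le_one hq0]; linarith
  have key : ∫⁻ x, (g x ^ q) ^ (1/q) ∂ν ≤ (∫⁻ x, g x ^ q ∂ν) ^ (1/q) :=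
    jensen_lintegral ν (hg.pow_const q) h1q h1q'
  have heq : ∀ x, (g x ^ q) ^ (1/q) = g x := by
    intro x
    rw [← ENNReal.rpow_mul, mul_one_div_cancel hq0.ne', ENNReal.rpow_one]
  simp_rw [heq] at key
  refine key.trans ?_
  calc (∫⁻ x, g x ^ q ∂ν) ^ (1/q) ≤ (1 : ℝ≥0∞) ^ (1/q) := ENNReal.rpow_le_rpow h h1q
    _ = 1 := ENNReal.one_rpow _

lemma ennreal_le_one_add_rpow {a : ℝ≥0∞} {q : ℝ} (hq : 1 ≤ q) : a ≤ 1 + a ^ q := by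
  rcases le_total a 1 with h | h
  · exact h.trans le_self_add
  · refine le_trans ?_ le_add_self
    conv_lhs => rw [← ENNReal.rpow_one a]
    exact ENNReal.rpow_le_rpow_of_exponent_le h hq

lemma integrable_of_bounded' {ν : Measure β} [IsFiniteMeasure ν] {f : β → ℂ}
    (hf : Measurable f) {B : ℝ} (hfB : ∀ x, ‖f x‖ ≤ B) : Integrable f ν :=
  Integrable.mono' (integrable_const B) hf.aestronglyMeasurable (ae_of_all _ hfB)

lemma rpow_le_one_add' {t : ℝ} (ht : 0 ≤ t) {α : ℝ} (hα : 0 ≤ α) (hα1 : α ≤ 1) :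
    t ^ α ≤ 1 + t := by
  rcases le_total t 1 with h | h
  · have : t ^ α ≤ 1 := Real.rpow_le_one ht h hα
    linarith
  · have : t ^ α ≤ t ^ (1:ℝ) := Real.rpow_le_rpow_of_exponent_le h hα1
    rw [Real.rpow_one] at this
    linarith

/-- Jensen's inequality for Bochner integrals: `∫ g^α ≤ (∫ g)^α`. -/
lemma integral_rpow_le' {γ : Type*} [MeasurableSpace γ] {pp : Measure γ}
    [IsProbabilityMeasure pp] {g : γ → ℝ} (hgm : Measurable g) (hg0 : ∀ p, 0 ≤ g p)
    (hgi : Integrable g pp) {α : ℝ} (hα : 0 < α) (hα1 : α ≤ 1) :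
    ∫ p, g p ^ α ∂pp ≤ (∫ p, g p ∂pp) ^ α := by
  have hmeas : Measurable fun p => g p ^ α :=
    (Real.continuous_rpow_const hα.le).measurable.comp hgm
  have h1 : ∫ p, g p ^ α ∂pp = (∫⁻ p, ENNReal.ofReal (g p) ^ α ∂pp).toReal := by
    rw [integral_eq_lintegral_of_nonneg_ae (ae_of_all _ fun p => Real.rpow_nonneg (hg0 p) α)
      hmeas.aestronglyMeasurable]
    congr 1
    refine lintegral_congr fun p => ?_
    rw [← ENNReal.ofReal_rpow_of_nonneg (hg0 p) hα.le]
  have h2 : ∫⁻ p, ENNReal.ofReal (g p) ^ α ∂pp ≤ (∫⁻ p, ENNReal.ofReal (g p) ∂pp) ^ α :=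
    jensen_lintegral pp (ENNReal.measurable_ofReal.comp hgm).aemeasurable hα.le hα1
  have h3 : ∫⁻ p, ENNReal.ofReal (g p) ∂pp = ENNReal.ofReal (∫ p, g p ∂pp) :=
    (MeasureTheory.ofReal_integral_eq_lintegral_ofReal hgi (ae_of_all _ hg0)).symm
  rw [h1]
  calc (∫⁻ p, ENNReal.ofReal (g p) ^ α ∂pp).toReal
      ≤ ((∫⁻ p, ENNReal.ofReal (g p) ∂pp) ^ α).toReal := by
        refine ENNReal.toReal_mono ?_ h2
        rw [h3]
        exact ENNReal.rpow_ne_top_of_nonneg hα.le ENNReal.ofReal_ne_top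
    _ = (∫ p, g p ∂pp) ^ α := by
        rw [h3, ENNReal.ofReal_rpow_of_nonneg (integral_nonneg hg0) hα.le,
          ENNReal.toReal_ofReal (Real.rpow_nonneg (integral_nonneg hg0) α)]

end AuxLemmas

section LawLemmas

open scoped ENNReal

variable {Ω β : Type*} [MeasurableSpace Ω] [MeasurableSpace β]
  (Pr : Measure Ω) [IsProbabilityMeasure Pr] (P : Kernel β β) [IsMarkovKernel P]
  (X : ℕ → Ω → β)

lemma map_succ (hchain : IsMarkovChain Pr P X) (n : ℕ) :
    Pr.map (X (n + 1)) = (Pr.map (X n)).bind P := by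
  ext s hs
  rw [Measure.map_apply (hchain.meas _) hs,
    Measure.bind_apply hs (Kernel.measurable P).aemeasurable,
    lintegral_map (P.measurable_coe hs) (hchain.meas n)]
  have hmark := hchain.markov n (fun _ => (1:ℝ)) (s.indicator (fun _ => (1:ℝ)))
    measurable_const (measurable_const.indicator hs)
    ⟨1, fun _ => by norm_num⟩
    ⟨1, fun x => by by_cases hx : x ∈ s <;> simp [Set.indicator, hx]⟩
  simp only [one_mul] at hmark
  have hL : ∫ ω, s.indicator (fun _ => (1:ℝ)) (X (n+1) ω) ∂Pr
      = (Pr (X (n+1) ⁻¹' s)).toReal := by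
    have he : (fun ω => s.indicator (fun _ => (1:ℝ)) (X (n+1) ω))
        = (X (n+1) ⁻¹' s).indicator (fun _ => (1:ℝ)) := by
      ext ω; by_cases h : X (n+1) ω ∈ s <;> simp [Set.indicator, h]
    rw [he]
    rw [← Measure.real_def]; exact integral_indicator_one (μ := Pr) (hchain.meas _ hs)
  have hR : ∫ ω, (∫ y, s.indicator (fun _ => (1:ℝ)) y ∂(P (X n ω))) ∂Pr
      = (∫⁻ ω, P (X n ω) s ∂Pr).toReal := by
    have h1 : ∀ ω, ∫ y, s.indicator (fun _ => (1:ℝ)) y ∂(P (X n ω))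
        = (P (X n ω) s).toReal := by
      intro ω; rw [← Measure.real_def]; exact integral_indicator_one (μ := P (X n ω)) hs
    simp_rw [h1]
    exact integral_toReal ((P.measurable_coe hs).comp (hchain.meas n)).aemeasurable
      (ae_of_all _ fun ω => (measure_lt_top _ s))
  rw [hL, hR] at hmark
  have hfin : ∫⁻ ω, P (X n ω) s ∂Pr ≠ ⊤ := by
    have h1 : ∫⁻ ω, P (X n ω) s ∂Pr ≤ ∫⁻ _ω, (1:ℝ≥0∞) ∂Pr :=
      lintegral_mono fun ω => prob_le_one
    simp only [lintegral_one, measure_univ, mul_one] at h1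
    exact (h1.trans_lt ENNReal.one_lt_top).ne
  exact (ENNReal.toReal_eq_toReal_iff' (measure_ne_top _ _) hfin).mp hmark

lemma map_eq_bind_iter (hchain : IsMarkovChain Pr P X) (n : ℕ) :
    Pr.map (X n) = (Pr.map (X 0)).bind (kIter P n) := by
  induction n with
  | zero =>
    rw [kIter]
    have h : ⇑(Kernel.id : Kernel β β) = Measure.dirac := by
      funext x; simp [Kernel.id_apply]
    rw [h, Measure.bind_dirac]
  | succ n ih =>
    rw [map_succ Pr P X hchain n, ih,
      Measure.bind_bind (Kernel.measurable _).aemeasurable (Kernel.measurable _).aemeasurable]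
    congr 1
    all_goals (funext x; rw [kIter, Kernel.comp_apply])

lemma bind_iter_invariant (μ : Measure β) (hinv : μ.bind P = μ) (n : ℕ) :
    μ.bind (kIter P n) = μ := by
  induction n with
  | zero =>
    rw [kIter]
    have h : ⇑(Kernel.id : Kernel β β) = Measure.dirac := by
      funext x; simp [Kernel.id_apply]
    rw [h, Measure.bind_dirac]
  | succ n ih =>
    have h : μ.bind (kIter P (n+1)) = (μ.bind (kIter P n)).bind P := by
      rw [Measure.bind_bind (Kernel.measurable _).aemeasurable (Kernel.measurable _).aemeasurable]
      congr 1
      all_goals (funext x; rw [kIter, Kernel.comp_apply])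
    rw [h, ih, hinv]

lemma snd_compProd_eq_bind (ν : Measure β) [IsProbabilityMeasure ν] (κ : Kernel β β)
    [IsMarkovKernel κ] : (ν ⊗ₘ κ).map Prod.snd = ν.bind κ := by
  ext s hs
  rw [Measure.map_apply measurable_snd hs,
    Measure.bind_apply hs (Kernel.measurable κ).aemeasurable,
    Measure.compProd_apply (measurable_snd hs)]
  rfl

lemma integral_bind_bounded (ν : Measure β) [IsProbabilityMeasure ν] (κ : Kernel β β)
    [IsMarkovKernel κ] (f : β → ℂ) (hf : Measurable f) (B : ℝ) (hfB : ∀ x, ‖f x‖ ≤ B) :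
    ∫ u, f u ∂(ν.bind κ) = ∫ x, ∫ u, f u ∂(κ x) ∂ν := by
  rw [← snd_compProd_eq_bind ν κ,
    integral_map measurable_snd.aemeasurable hf.aestronglyMeasurable]
  have hint : Integrable (fun p : β × β => f p.2) (ν ⊗ₘ κ) :=
    Integrable.mono' (integrable_const B)
      (hf.comp measurable_snd).aestronglyMeasurable (ae_of_all _ fun p => hfB p.2)
  exact Measure.integral_compProd hint

end LawLemmas

section KeyBound

open scoped ENNReal

variable {β : Type*} [NormedAddCommGroup β] [MeasurableSpace β] [BorelSpace β]
  [SecondCountableTopology β]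

lemma integrable_norm_of_lintegral_ne_top {ν : Measure β}
    (h : ∫⁻ u, (‖u‖₊ : ℝ≥0∞) ∂ν ≠ ⊤) : Integrable (fun u : β => ‖u‖) ν := by
  refine ⟨measurable_norm.aestronglyMeasurable, ?_⟩
  have : HasFiniteIntegral (fun u : β => ‖u‖) ν := by
    rw [hasFiniteIntegral_def]
    simpa [nnnorm_norm, ← enorm_eq_nnnorm] using h.lt_top
  exact this

lemma key_bound (ν₁ ν₂ : Measure β) [IsProbabilityMeasure ν₁] [IsProbabilityMeasure ν₂]
    (h₁ : ∫⁻ u, (‖u‖₊ : ℝ≥0∞) ∂ν₁ ≠ ⊤) (h₂ : ∫⁻ u, (‖u‖₊ : ℝ≥0∞) ∂ν₂ ≠ ⊤)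
    {α : ℝ} (hα : 0 < α) (hα1 : α ≤ 1)
    (f : β → ℂ) (hf_meas : Measurable f) (B : ℝ) (hfB : ∀ x, ‖f x‖ ≤ B)
    (H : ℝ) (hH : 0 ≤ H) (hHol : ∀ x y, ‖f x - f y‖ ≤ H * dist x y ^ α)
    (W : ℝ) (hW : W1 dist ν₁ ν₂ ≤ W) :
    ‖(∫ u, f u ∂ν₁) - ∫ u, f u ∂ν₂‖ ≤ H * W ^ α := by
  set S := { c | ∃ pi : Measure (β × β), IsProbabilityMeasure pi ∧
    pi.map Prod.fst = ν₁ ∧ pi.map Prod.snd = ν₂ ∧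
    Integrable (fun p => dist p.1 p.2) pi ∧ c = ∫ p, dist p.1 p.2 ∂pi } with hS
  have hn1 : Integrable (fun u : β => ‖u‖) ν₁ := integrable_norm_of_lintegral_ne_top h₁
  have hn2 : Integrable (fun u : β => ‖u‖) ν₂ := integrable_norm_of_lintegral_ne_top h₂
  have hcost : ∀ (pi : Measure (β × β)), IsProbabilityMeasure pi →
      pi.map Prod.fst = ν₁ → pi.map Prod.snd = ν₂ →
      Integrable (fun p : β × β => dist p.1 p.2) pi := by
    intro pi _ hfst hsnd
    have hif : Integrable (fun p : β × β => ‖p.1‖) pi := by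
      have := (integrable_map_measure measurable_norm.aestronglyMeasurable
        measurable_fst.aemeasurable (f := Prod.fst) (μ := pi)).mp (hfst ▸ hn1)
      exact this
    have his : Integrable (fun p : β × β => ‖p.2‖) pi := by
      have := (integrable_map_measure measurable_norm.aestronglyMeasurable
        measurable_snd.aemeasurable (f := Prod.snd) (μ := pi)).mp (hsnd ▸ hn2)
      exact this
    refine Integrable.mono' (hif.add his) measurable_dist.aestronglyMeasurable
      (ae_of_all _ fun p => ?_)
    rw [Real.norm_of_nonneg dist_nonneg, dist_eq_norm]
    exact norm_sub_le _ _
  have hSne : S.Nonempty := by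
    refine ⟨∫ p, dist p.1 p.2 ∂(ν₁.prod ν₂), ν₁.prod ν₂, inferInstance, ?_, ?_, ?_, rfl⟩
    · exact Measure.fst_prod
    · exact Measure.snd_prod
    · exact hcost _ inferInstance Measure.fst_prod Measure.snd_prod
  have hmain : ∀ c ∈ S, ‖(∫ u, f u ∂ν₁) - ∫ u, f u ∂ν₂‖ ≤ H * c ^ α ∧ 0 ≤ c := by
    rintro c ⟨pi, hpiP, hfst, hsnd, hint, rfl⟩
    have hc0 : 0 ≤ ∫ p, dist p.1 p.2 ∂pi := integral_nonneg fun p => dist_nonneg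
    refine ⟨?_, hc0⟩
    have hi1 : Integrable (fun p : β × β => f p.1) pi :=
      integrable_of_bounded' (hf_meas.comp measurable_fst) (fun p => hfB p.1)
    have hi2 : Integrable (fun p : β × β => f p.2) pi :=
      integrable_of_bounded' (hf_meas.comp measurable_snd) (fun p => hfB p.2)
    have e1 : ∫ u, f u ∂ν₁ = ∫ p, f p.1 ∂pi := by
      rw [← hfst, integral_map measurable_fst.aemeasurable hf_meas.aestronglyMeasurable]
    have e2 : ∫ u, f u ∂ν₂ = ∫ p, f p.2 ∂pi := by
      rw [← hsnd, integral_map measurable_snd.aemeasurable hf_meas.aestronglyMeasurable]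
    rw [e1, e2, ← integral_sub hi1 hi2]
    have hdai : Integrable (fun p : β × β => dist p.1 p.2 ^ α) pi := by
      refine Integrable.mono' ((integrable_const (1:ℝ)).add hint)
        ((Real.continuous_rpow_const hα.le).measurable.comp
          measurable_dist).aestronglyMeasurable (ae_of_all _ fun p => ?_)
      rw [Real.norm_of_nonneg (Real.rpow_nonneg dist_nonneg α)]
      exact rpow_le_one_add' dist_nonneg hα.le hα1
    calc ‖∫ p, (f p.1 - f p.2) ∂pi‖ ≤ ∫ p, ‖f p.1 - f p.2‖ ∂pi :=
          norm_integral_le_integral_norm _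
      _ ≤ ∫ p, H * dist p.1 p.2 ^ α ∂pi :=
          integral_mono (hi1.sub hi2).norm (hdai.const_mul H) fun p => hHol p.1 p.2
      _ = H * ∫ p, dist p.1 p.2 ^ α ∂pi := integral_const_mul _ _
      _ ≤ H * (∫ p, dist p.1 p.2 ∂pi) ^ α :=
          mul_le_mul_of_nonneg_left
            (integral_rpow_le' measurable_dist (fun p => dist_nonneg) hint hα hα1) hH
  have hfinal : ∀ ε > (0:ℝ), ‖(∫ u, f u ∂ν₁) - ∫ u, f u ∂ν₂‖ ≤ H * (W + ε) ^ α := by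
    intro ε hε
    obtain ⟨c, hcS, hclt⟩ := Real.lt_sInf_add_pos hSne hε
    have hc := hmain c hcS
    refine hc.1.trans ?_
    refine mul_le_mul_of_nonneg_left ?_ hH
    refine Real.rpow_le_rpow hc.2 ?_ hα.le
    have heq : sInf S = W1 dist ν₁ ν₂ := rfl
    linarith [hclt, hW]
  have htend : Filter.Tendsto (fun ε : ℝ => H * (W + ε) ^ α) (nhdsWithin 0 (Set.Ioi 0))
      (nhds (H * W ^ α)) := by
    have hcont : ContinuousAt (fun ε : ℝ => H * (W + ε) ^ α) 0 := by
      refine ContinuousAt.mul continuousAt_const ?_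
      have h1 : ContinuousAt (fun t : ℝ => t ^ α) (W + 0) :=
        Real.continuousAt_rpow_const _ _ (Or.inr hα.le)
      have h2 : ContinuousAt (fun ε : ℝ => W + ε) 0 := by fun_prop
      exact h1.comp h2
    have h0 : H * (W + (0:ℝ)) ^ α = H * W ^ α := by simp
    exact h0 ▸ hcont.continuousWithinAt (s := Set.Ioi (0:ℝ))
  exact ge_of_tendsto htend (eventually_nhdsWithin_of_forall fun ε hε => hfinal ε hε)

end KeyBound
-- ===================== end auxiliary lemmas =====================

open scoped ENNReal

/-- **Lemma (bias decay for Hölder functions).** For an exponentially `W₁`-contracting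
Markov chain on `ℝ^d` with `q`-th moments bounded by 1 (for the chain, the initial
distribution and the invariant measure `μ`), every bounded `α`-Hölder function `f` with
Hölder constant `H` satisfies `|E f(X_n) - μ(f)| ≤ 2 D^α κ^(αn) H`. -/
theorem bias_decay_of_holder {Ω : Type*} [MeasurableSpace Ω]
    (Pr : Measure Ω) [IsProbabilityMeasure Pr] (d : ℕ)
    (P : Kernel (EuclideanSpace ℝ (Fin d)) (EuclideanSpace ℝ (Fin d))) [IsMarkovKernel P]
    (X : ℕ → Ω → EuclideanSpace ℝ (Fin d)) (hchain : IsMarkovChain Pr P X)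
    (D κ : ℝ) (hD : 1 ≤ D) (hκ : κ ∈ Set.Ioo (0 : ℝ) 1)
    -- Assumption 1: W₁(Pⁿ(x,·), Pⁿ(y,·)) ≤ D κⁿ |x - y|
    (hcontr : ∀ (n : ℕ) (x y : EuclideanSpace ℝ (Fin d)),
      W1 dist (kIter P n x) (kIter P n y) ≤ D * κ ^ n * dist x y)
    (q : ℝ) (hq : 1 < q)
    -- Assumption 2 with M = 1: sup_n (E |X_n|^q)^(1/q) ≤ 1
    (hmom : ∀ n : ℕ, ∫⁻ ω, (‖X n ω‖₊ : ENNReal) ^ q ∂Pr ≤ 1)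
    (μ : Measure (EuclideanSpace ℝ (Fin d))) [IsProbabilityMeasure μ] (hinv : μ.bind P = μ)
    -- the invariant measure satisfies the same moment bound
    (hmomμ : ∫⁻ x, (‖x‖₊ : ENNReal) ^ q ∂μ ≤ 1)
    (α : ℝ) (hα : α ∈ Set.Ioc (0 : ℝ) 1)
    (f : EuclideanSpace ℝ (Fin d) → ℂ) (hf_meas : Measurable f)
    -- f is bounded
    (B : ℝ) (hfB : ∀ x, ‖f x‖ ≤ B)
    -- f is α-Hölder with constant H
    (H : ℝ) (hH : 0 ≤ H)
    (hHol : ∀ x y, ‖f x - f y‖ ≤ H * dist x y ^ α)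
    (n : ℕ) :
    ‖(∫ ω, f (X n ω) ∂Pr) - ∫ x, f x ∂μ‖ ≤ 2 * D ^ α * κ ^ (α * n) * H := by
  
  classical
  obtain ⟨hα0, hα1⟩ := hα
  obtain ⟨hκ0, hκ1⟩ := hκ
  have hD0 : (0:ℝ) < D := lt_of_lt_of_le one_pos hD
  have hB0 : (0:ℝ) ≤ B := le_trans (norm_nonneg _) (hfB 0)
  set γ₀ : Measure (EuclideanSpace ℝ (Fin d)) := Pr.map (X 0) with hγ₀
  haveI : IsProbabilityMeasure γ₀ := Measure.isProbabilityMeasure_map (hchain.meas 0).aemeasurable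
  set K : Kernel (EuclideanSpace ℝ (Fin d)) (EuclideanSpace ℝ (Fin d)) := kIter P n with hK
  haveI : IsMarkovKernel K := kIter_markov P n
  set g : EuclideanSpace ℝ (Fin d) → ℂ := fun z => ∫ u, f u ∂(K z) with hg
  have hgsm : StronglyMeasurable g := by
    have := StronglyMeasurable.integral_kernel_prod_right' (κ := K)
      (f := fun p : EuclideanSpace ℝ (Fin d) × EuclideanSpace ℝ (Fin d) => f p.2)
      ((hf_meas.comp measurable_snd).stronglyMeasurable)
    exact this
  have hgB : ∀ z, ‖g z‖ ≤ B := by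
    intro z
    have := norm_integral_le_of_norm_le_const (μ := K z) (f := f) (C := B)
      (ae_of_all _ hfB)
    simpa [measure_univ] using this
  -- rewrite the two integrals via the kernel iterate
  have e1 : ∫ ω, f (X n ω) ∂Pr = ∫ z, g z ∂γ₀ := by
    rw [← integral_map (hchain.meas n).aemeasurable hf_meas.aestronglyMeasurable,
      map_eq_bind_iter Pr P X hchain n, ← hγ₀, ← hK,
      integral_bind_bounded γ₀ K f hf_meas B hfB]
  have e2 : ∫ x, f x ∂μ = ∫ z, g z ∂μ := by
    conv_lhs => rw [← bind_iter_invariant P μ hinv n, ← hK,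
      integral_bind_bounded μ K f hf_meas B hfB]
  rw [e1, e2]
  -- the product measure
  set ρ : Measure (EuclideanSpace ℝ (Fin d) × EuclideanSpace ℝ (Fin d)) := γ₀.prod μ with hρ
  haveI : IsProbabilityMeasure ρ := by rw [hρ]; infer_instance
  have hmapfst : ρ.map Prod.fst = γ₀ := Measure.fst_prod
  have hmapsnd : ρ.map Prod.snd = μ := Measure.snd_prod
  have hgi1 : Integrable (fun p : _ × _ => g p.1) ρ :=
    Integrable.mono' (integrable_const B)
      (hgsm.comp_measurable measurable_fst).aestronglyMeasurable
      (ae_of_all _ fun p => hgB p.1)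
  have hgi2 : Integrable (fun p : _ × _ => g p.2) ρ :=
    Integrable.mono' (integrable_const B)
      (hgsm.comp_measurable measurable_snd).aestronglyMeasurable
      (ae_of_all _ fun p => hgB p.2)
  have hsplit : (∫ z, g z ∂γ₀) - ∫ z, g z ∂μ = ∫ p, (g p.1 - g p.2) ∂ρ := by
    rw [integral_sub hgi1 hgi2]
    congr 1
    · rw [← hmapfst, integral_map measurable_fst.aemeasurable hgsm.aestronglyMeasurable]
    · rw [← hmapsnd, integral_map measurable_snd.aemeasurable hgsm.aestronglyMeasurable]
  -- moment bounds
  have hnormmeas : Measurable fun u : EuclideanSpace ℝ (Fin d) => (‖u‖₊ : ℝ≥0∞) ^ q :=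
    (measurable_nnnorm.coe_nnreal_ennreal).pow_const q
  set Φ : EuclideanSpace ℝ (Fin d) → ℝ≥0∞ :=
    fun z => ∫⁻ u, (‖u‖₊ : ℝ≥0∞) ^ q ∂(K z) with hΦ
  have hΦm : Measurable Φ := Measurable.lintegral_kernel hnormmeas
  have hbindγ : ∫⁻ z, Φ z ∂γ₀ ≤ 1 := by
    have h1 : ∫⁻ u, (‖u‖₊ : ℝ≥0∞) ^ q ∂(γ₀.bind K) ≤ 1 := by
      rw [hK, hγ₀, ← map_eq_bind_iter Pr P X hchain n,
        lintegral_map hnormmeas (hchain.meas n)]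
      exact hmom n
    rw [Measure.lintegral_bind (Kernel.measurable K).aemeasurable hnormmeas.aemeasurable] at h1
    exact h1
  have hbindμ : ∫⁻ z, Φ z ∂μ ≤ 1 := by
    have h1 : ∫⁻ u, (‖u‖₊ : ℝ≥0∞) ^ q ∂(μ.bind K) ≤ 1 := by
      rw [hK, bind_iter_invariant P μ hinv n]
      exact hmomμ
    rw [Measure.lintegral_bind (Kernel.measurable K).aemeasurable hnormmeas.aemeasurable] at h1
    exact h1
  have haeγ : ∀ᵐ z ∂γ₀, Φ z ≠ ⊤ := by
    filter_upwards [ae_lt_top hΦm (hbindγ.trans_lt ENNReal.one_lt_top).ne] with z hz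
    exact hz.ne
  have haeμ : ∀ᵐ z ∂μ, Φ z ≠ ⊤ := by
    filter_upwards [ae_lt_top hΦm (hbindμ.trans_lt ENNReal.one_lt_top).ne] with z hz
    exact hz.ne
  have hNset : MeasurableSet {z : EuclideanSpace ℝ (Fin d) | Φ z ≠ ⊤} :=
    (hΦm (measurableSet_singleton ⊤)).compl
  have haeρ1 : ∀ᵐ p ∂ρ, Φ p.1 ≠ ⊤ :=
    (ae_map_iff measurable_fst.aemeasurable hNset).mp (hmapfst.symm ▸ haeγ)
  have haeρ2 : ∀ᵐ p ∂ρ, Φ p.2 ≠ ⊤ :=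
    (ae_map_iff measurable_snd.aemeasurable hNset).mp (hmapsnd.symm ▸ haeμ)
  -- pointwise bound
  set C : ℝ := H * (D * κ ^ n) ^ α with hC
  have hC0 : 0 ≤ C := mul_nonneg hH (Real.rpow_nonneg (by positivity) α)
  have hfirstmom : ∀ z : EuclideanSpace ℝ (Fin d), Φ z ≠ ⊤ →
      ∫⁻ u, (‖u‖₊ : ℝ≥0∞) ∂(K z) ≠ ⊤ := by
    intro z hz
    have hle : ∫⁻ u, (‖u‖₊ : ℝ≥0∞) ∂(K z) ≤ ∫⁻ u, (1 + (‖u‖₊ : ℝ≥0∞) ^ q) ∂(K z) :=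
      lintegral_mono fun u => ennreal_le_one_add_rpow hq.le
    rw [lintegral_add_left measurable_const] at hle
    simp only [lintegral_const, measure_univ, mul_one] at hle
    exact (hle.trans_lt (ENNReal.add_lt_top.mpr
      ⟨ENNReal.one_lt_top, lt_top_iff_ne_top.mpr hz⟩)).ne
  have hpt : ∀ᵐ p ∂ρ, ‖g p.1 - g p.2‖ ≤ C * dist p.1 p.2 ^ α := by
    filter_upwards [haeρ1, haeρ2] with p hp1 hp2
    have hkb := key_bound (K p.1) (K p.2) (hfirstmom _ hp1) (hfirstmom _ hp2) hα0 hα1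
      f hf_meas B hfB H hH hHol (D * κ ^ n * dist p.1 p.2) (hcontr n p.1 p.2)
    have hsplitpow : (D * κ ^ n * dist p.1 p.2) ^ α
        = (D * κ ^ n) ^ α * dist p.1 p.2 ^ α :=
      Real.mul_rpow (by positivity) dist_nonneg
    calc ‖g p.1 - g p.2‖ ≤ H * (D * κ ^ n * dist p.1 p.2) ^ α := hkb
      _ = C * dist p.1 p.2 ^ α := by rw [hsplitpow, hC]; ring
  -- integrability of the distance on the product
  have hmomγ : ∫⁻ z, (‖z‖₊ : ℝ≥0∞) ∂γ₀ ≤ 1 := by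
    refine lintegral_le_one_of_rpow_le_one γ₀
      (measurable_nnnorm.coe_nnreal_ennreal).aemeasurable hq.le ?_
    rw [hγ₀, lintegral_map hnormmeas (hchain.meas 0)]
    exact hmom 0
  have hmomμ' : ∫⁻ z, (‖z‖₊ : ℝ≥0∞) ∂μ ≤ 1 :=
    lintegral_le_one_of_rpow_le_one μ
      (measurable_nnnorm.coe_nnreal_ennreal).aemeasurable hq.le hmomμ
  have hnγ : Integrable (fun z : EuclideanSpace ℝ (Fin d) => ‖z‖) γ₀ :=
    integrable_norm_of_lintegral_ne_top (hmomγ.trans_lt ENNReal.one_lt_top).ne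
  have hnμ : Integrable (fun z : EuclideanSpace ℝ (Fin d) => ‖z‖) μ :=
    integrable_norm_of_lintegral_ne_top (hmomμ'.trans_lt ENNReal.one_lt_top).ne
  have hIntγ1 : ∫ z, ‖z‖ ∂γ₀ ≤ 1 := by
    rw [integral_eq_lintegral_of_nonneg_ae (ae_of_all _ fun z => norm_nonneg z)
      measurable_norm.aestronglyMeasurable]
    simp_rw [ofReal_norm_eq_enorm, enorm_eq_nnnorm]
    calc (∫⁻ z, (‖z‖₊ : ℝ≥0∞) ∂γ₀).toReal ≤ (1 : ℝ≥0∞).toReal :=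
          ENNReal.toReal_mono ENNReal.one_ne_top hmomγ
      _ = 1 := by simp
  have hIntμ1 : ∫ z, ‖z‖ ∂μ ≤ 1 := by
    rw [integral_eq_lintegral_of_nonneg_ae (ae_of_all _ fun z => norm_nonneg z)
      measurable_norm.aestronglyMeasurable]
    simp_rw [ofReal_norm_eq_enorm, enorm_eq_nnnorm]
    calc (∫⁻ z, (‖z‖₊ : ℝ≥0∞) ∂μ).toReal ≤ (1 : ℝ≥0∞).toReal :=
          ENNReal.toReal_mono ENNReal.one_ne_top hmomμ'
      _ = 1 := by simp
  have hif : Integrable (fun p : _ × _ => ‖p.1‖) ρ := by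
    have := (integrable_map_measure measurable_norm.aestronglyMeasurable
      measurable_fst.aemeasurable (f := Prod.fst) (μ := ρ)).mp (hmapfst ▸ hnγ)
    exact this
  have his : Integrable (fun p : _ × _ => ‖p.2‖) ρ := by
    have := (integrable_map_measure measurable_norm.aestronglyMeasurable
      measurable_snd.aemeasurable (f := Prod.snd) (μ := ρ)).mp (hmapsnd ▸ hnμ)
    exact this
  have hdint : Integrable (fun p : _ × _ => dist p.1 p.2) ρ := by
    refine Integrable.mono' (hif.add his) measurable_dist.aestronglyMeasurable
      (ae_of_all _ fun p => ?_)
    rw [Real.norm_of_nonneg dist_nonneg, dist_eq_norm]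
    exact norm_sub_le _ _
  have hdαint : Integrable (fun p : _ × _ => dist p.1 p.2 ^ α) ρ := by
    refine Integrable.mono' ((integrable_const (1:ℝ)).add hdint)
      ((Real.continuous_rpow_const hα0.le).measurable.comp
        measurable_dist).aestronglyMeasurable (ae_of_all _ fun p => ?_)
    rw [Real.norm_of_nonneg (Real.rpow_nonneg dist_nonneg α)]
    exact rpow_le_one_add' dist_nonneg hα0.le hα1
  -- the distance integral is at most 2
  have hdist2 : ∫ p, dist p.1 p.2 ∂ρ ≤ 2 := by
    have hsum : ∫ p, dist p.1 p.2 ∂ρ ≤ ∫ p, (‖p.1‖ + ‖p.2‖) ∂(ρ) := by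
      refine integral_mono hdint (hif.add his) fun p => ?_
      rw [dist_eq_norm]; exact norm_sub_le _ _
    rw [integral_add hif his] at hsum
    have hf1 : ∫ p, ‖p.1‖ ∂ρ = ∫ z, ‖z‖ ∂γ₀ := by
      rw [← hmapfst, integral_map measurable_fst.aemeasurable
        measurable_norm.aestronglyMeasurable]
    have hf2 : ∫ p, ‖p.2‖ ∂ρ = ∫ z, ‖z‖ ∂μ := by
      rw [← hmapsnd, integral_map measurable_snd.aemeasurable
        measurable_norm.aestronglyMeasurable]
    rw [hf1, hf2] at hsum
    linarith
  have hdistα2 : ∫ p, dist p.1 p.2 ^ α ∂ρ ≤ 2 := by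
    have hj : ∫ p, dist p.1 p.2 ^ α ∂ρ ≤ (∫ p, dist p.1 p.2 ∂ρ) ^ α :=
      integral_rpow_le' measurable_dist (fun p => dist_nonneg) hdint hα0 hα1
    have h2 : (∫ p, dist p.1 p.2 ∂ρ) ^ α ≤ (2:ℝ) ^ α :=
      Real.rpow_le_rpow (integral_nonneg fun p => dist_nonneg) hdist2 hα0.le
    have h3 : (2:ℝ) ^ α ≤ (2:ℝ) ^ (1:ℝ) :=
      Real.rpow_le_rpow_of_exponent_le one_le_two hα1
    rw [Real.rpow_one] at h3
    linarith
  -- conclusion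
  have hmaincalc : ‖(∫ z, g z ∂γ₀) - ∫ z, g z ∂μ‖ ≤ C * 2 := by
    rw [hsplit]
    calc ‖∫ p, (g p.1 - g p.2) ∂ρ‖ ≤ ∫ p, ‖g p.1 - g p.2‖ ∂ρ :=
          norm_integral_le_integral_norm _
      _ ≤ ∫ p, C * dist p.1 p.2 ^ α ∂ρ :=
          integral_mono_ae (hgi1.sub hgi2).norm (hdαint.const_mul C) hpt
      _ = C * ∫ p, dist p.1 p.2 ^ α ∂ρ := integral_const_mul _ _
      _ ≤ C * 2 := mul_le_mul_of_nonneg_left hdistα2 hC0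
  refine hmaincalc.trans (le_of_eq ?_)
  have hDκ : (D * κ ^ n) ^ α = D ^ α * κ ^ (α * n) := by
    rw [Real.mul_rpow hD0.le (pow_nonneg hκ0.le n), ← Real.rpow_natCast κ n,
      ← Real.rpow_mul hκ0.le, mul_comm (n:ℝ) α]
  rw [hC, hDκ]
  ring
end

section
/- Let (X_n) be a Markov chain on ℝ^d with transition kernel P satisfying W₁(Pⁿ(x,·), Pⁿ(y,·)) ≤ D κⁿ |x−y| for all n and all x,y, with D ≥ 1 and κ ∈ (0,1), and suppose sup_{n≥0} (E|X_n|^q)^{1/q} ≤ 1 for some q > 1. Then for every α ∈ (0,1], every bounded α-Hölder continuous function f : ℝ^d → ℂ, and all m, n ∈ ℕ, |Cov(f(X_n), f(X_m))| ≤ 8 D^α κ^{α|m−n|} ‖f‖_∞ Hol_α(f). -/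
open MeasureTheory ProbabilityTheory Real

set_option linter.unusedSectionVars false

section Aux
variable {γ : Type*} [MeasurableSpace γ] {E : Type*} [NormedAddCommGroup E]

lemma integrable_of_bdd {μ : Measure γ} [IsFiniteMeasure μ] {g : γ → E}
    (hg : AEStronglyMeasurable g μ) {C : ℝ} (hb : ∀ x, ‖g x‖ ≤ C) : Integrable g μ :=
  Integrable.mono' (integrable_const C) hg (Filter.Eventually.of_forall hb)

lemma norm_integral_le_of_bdd [NormedSpace ℝ E] {μ : Measure γ} [IsProbabilityMeasure μ]
    {g : γ → E} {C : ℝ} (hb : ∀ x, ‖g x‖ ≤ C) : ‖∫ x, g x ∂μ‖ ≤ C := by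
  have := norm_integral_le_of_norm_le_const (μ := μ) (C := C)
    (Filter.Eventually.of_forall hb)
  simpa using this

lemma integral_comp_of_bdd {α β : Type*} [MeasurableSpace α] [MeasurableSpace β]
    [NormedSpace ℝ E]
    (η : Kernel β γ) [IsMarkovKernel η] (κ : Kernel α β) [IsMarkovKernel κ] (a : α)
    {g : γ → E} (hg : StronglyMeasurable g) {C : ℝ} (hb : ∀ x, ‖g x‖ ≤ C) :
    ∫ c, g c ∂((η ∘ₖ κ) a) = ∫ b, ∫ c, g c ∂(η b) ∂(κ a) := by
  rw [Kernel.comp_eq_snd_compProd, Kernel.snd_apply,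
    integral_map measurable_snd.aemeasurable hg.aestronglyMeasurable]
  have hint : Integrable (fun p : β × γ => g p.2) ((κ ⊗ₖ Kernel.prodMkLeft α η) a) :=
    integrable_of_bdd (hg.comp_measurable measurable_snd).aestronglyMeasurable
      (fun p => hb p.2)
  rw [ProbabilityTheory.integral_compProd hint]
  simp [Kernel.prodMkLeft_apply]

lemma rpow_le_tangent {α c t : ℝ} (hα : 0 < α) (hα1 : α ≤ 1) (hc : 0 < c) (ht : 0 ≤ t) :
    t ^ α ≤ c ^ α + c ^ (α - 1) * t := by
  rcases le_or_gt t c with h | h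
  · have h1 : t ^ α ≤ c ^ α := Real.rpow_le_rpow ht h hα.le
    have h2 : 0 ≤ c ^ (α - 1) * t := mul_nonneg (Real.rpow_nonneg hc.le _) ht
    linarith
  · have ht' : 0 < t := hc.trans h
    have h1 : t ^ (α - 1) ≤ c ^ (α - 1) :=
      Real.rpow_le_rpow_of_nonpos hc h.le (by linarith)
    have h2 : t ^ α = t ^ (α - 1) * t := by
      rw [← Real.rpow_add_one ht'.ne' (α - 1)]; ring_nf
    have h3 : t ^ (α - 1) * t ≤ c ^ (α - 1) * t := mul_le_mul_of_nonneg_right h1 ht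
    have h4 : 0 ≤ c ^ α := Real.rpow_nonneg hc.le _
    linarith [h2 ▸ h3]

lemma real_rpow_add_le {a b α : ℝ} (ha : 0 ≤ a) (hb : 0 ≤ b) (hα : 0 ≤ α) (hα1 : α ≤ 1) :
    (a + b) ^ α ≤ a ^ α + b ^ α := by
  have := NNReal.rpow_add_le_add_rpow (a.toNNReal) (b.toNNReal) hα hα1
  have hcoe : ((a.toNNReal + b.toNNReal : NNReal) : ℝ) = a + b := by
    simp [Real.coe_toNNReal, ha, hb]
  calc (a + b) ^ α = (((a.toNNReal + b.toNNReal : NNReal) : ℝ)) ^ α := by rw [hcoe]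
    _ = (((a.toNNReal + b.toNNReal : NNReal) ^ α : NNReal) : ℝ) := by
        rw [NNReal.coe_rpow]
    _ ≤ (((a.toNNReal ^ α + b.toNNReal ^ α : NNReal)) : ℝ) := by exact_mod_cast this
    _ = a ^ α + b ^ α := by
        push_cast [NNReal.coe_rpow]
        simp [Real.coe_toNNReal, ha, hb]

lemma rpow_le_one_add_rpow {t α q : ℝ} (ht : 0 ≤ t) (hα : 0 < α) (hαq : α ≤ q) :
    t ^ α ≤ 1 + t ^ q := by
  rcases le_total t 1 with h | h
  · have : t ^ α ≤ 1 := Real.rpow_le_one ht h hα.le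
    have h2 : 0 ≤ t ^ q := Real.rpow_nonneg ht _
    linarith
  · have : t ^ α ≤ t ^ q := Real.rpow_le_rpow_of_exponent_le h hαq
    linarith

lemma ofReal_norm_eq_coe_nnnorm {F : Type*} [NormedAddCommGroup F] (a : F) :
    ENNReal.ofReal ‖a‖ = (‖a‖₊ : ENNReal) := ofReal_norm a

end Aux

section Markov

variable {Ω β : Type*} [MeasurableSpace Ω] [MeasurableSpace β]
  {Pr : Measure Ω} [IsProbabilityMeasure Pr]
  {P : Kernel β β} [IsMarkovKernel P] {X : ℕ → Ω → β}

instance kIter_isMarkov (P : Kernel β β) [IsMarkovKernel P] (k : ℕ) :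
    IsMarkovKernel (kIter P k) := by
  induction k with
  | zero => rw [kIter]; infer_instance
  | succ k ih => rw [kIter]; infer_instance

lemma kIterInt_sm {E : Type*} [NormedAddCommGroup E] [NormedSpace ℝ E]
    (P : Kernel β β) [IsMarkovKernel P] (k : ℕ) {h : β → E}
    (hh : StronglyMeasurable h) :
    StronglyMeasurable (fun x => ∫ y, h y ∂(kIter P k x)) :=
  StronglyMeasurable.integral_kernel_prod_right (κ := kIter P k)
    (f := fun _ y => h y) (hh.comp_measurable measurable_snd)

lemma markov_iter (hchain : IsMarkovChain Pr P X) (k : ℕ) :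
    ∀ (n : ℕ) (h h₁ : β → ℝ), Measurable h → Measurable h₁ →
    ∀ (Ch C₁ : ℝ), (∀ x, |h x| ≤ Ch) → (∀ x, |h₁ x| ≤ C₁) →
    ∫ ω, h₁ (X n ω) * h (X (n + k) ω) ∂Pr
      = ∫ ω, h₁ (X n ω) * (∫ y, h y ∂(kIter P k (X n ω))) ∂Pr := by
  induction k with
  | zero =>
    intro n h h₁ hh hh₁ Ch C₁ hbh hbh₁
    simp only [Nat.add_zero, kIter, Kernel.id_apply, integral_dirac' _ _ hh.stronglyMeasurable]
  | succ k ih =>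
    intro n h h₁ hh hh₁ Ch C₁ hbh hbh₁
    have hstep : ∫ ω, h₁ (X n ω) * h (X (n + (k+1)) ω) ∂Pr
        = ∫ ω, h₁ (X n ω) * (∫ y, h y ∂(P (X (n + k) ω))) ∂Pr := by
      have hn : n < n + k + 1 := by omega
      have := hchain.markov (n + k) (fun v => h₁ (v ⟨n, hn⟩)) h
        (hh₁.comp (measurable_pi_apply _)) hh ⟨C₁, fun v => hbh₁ _⟩ ⟨Ch, hbh⟩
      have heq : n + (k + 1) = (n + k) + 1 := by omega
      rw [heq]
      exact this
    rw [hstep]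
    have hPh_meas : Measurable (fun x => ∫ y, h y ∂(P x)) :=
      (StronglyMeasurable.integral_kernel_prod_right (κ := P) (f := fun _ y => h y)
        (hh.stronglyMeasurable.comp_measurable measurable_snd)).measurable
    have hPh_bdd : ∀ x, |∫ y, h y ∂(P x)| ≤ Ch := by
      intro x
      have := norm_integral_le_of_bdd (μ := P x) (g := h) (C := Ch)
        (by simpa [Real.norm_eq_abs] using hbh)
      simpa [Real.norm_eq_abs] using this
    rw [ih n _ h₁ hPh_meas hh₁ Ch C₁ hPh_bdd hbh₁]
    congr 1
    ext ω
    congr 1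
    rw [show kIter P (k+1) = P ∘ₖ kIter P k from rfl,
      integral_comp_of_bdd P (kIter P k) _ hh.stronglyMeasurable hbh]

lemma markov_iter_complex (hchain : IsMarkovChain Pr P X) (k n : ℕ)
    (h h₁ : β → ℂ) (hh : Measurable h) (hh₁ : Measurable h₁)
    (Ch C₁ : ℝ) (hbh : ∀ x, ‖h x‖ ≤ Ch) (hbh₁ : ∀ x, ‖h₁ x‖ ≤ C₁) :
    ∫ ω, h₁ (X n ω) * h (X (n + k) ω) ∂Pr
      = ∫ ω, h₁ (X n ω) * (∫ y, h y ∂(kIter P k (X n ω))) ∂Pr := by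
  have hXn := hchain.meas n
  have hXm := hchain.meas (n + k)
  set G : β → ℂ := fun x => ∫ y, h y ∂(kIter P k x) with hGdef
  have hG_sm : StronglyMeasurable G := kIterInt_sm P k hh.stronglyMeasurable
  have hG_bdd : ∀ x, ‖G x‖ ≤ Ch := fun x => norm_integral_le_of_bdd hbh
  have hr : Measurable (fun x => (h x).re) := Complex.measurable_re.comp hh
  have hs : Measurable (fun x => (h x).im) := Complex.measurable_im.comp hh
  have hr₁ : Measurable (fun x => (h₁ x).re) := Complex.measurable_re.comp hh₁
  have hs₁ : Measurable (fun x => (h₁ x).im) := Complex.measurable_im.comp hh₁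
  have hbr : ∀ x, |(h x).re| ≤ Ch := fun x => (Complex.abs_re_le_norm _).trans (hbh x)
  have hbs : ∀ x, |(h x).im| ≤ Ch := fun x => (Complex.abs_im_le_norm _).trans (hbh x)
  have hbr₁ : ∀ x, |(h₁ x).re| ≤ C₁ := fun x => (Complex.abs_re_le_norm _).trans (hbh₁ x)
  have hbs₁ : ∀ x, |(h₁ x).im| ≤ C₁ := fun x => (Complex.abs_im_le_norm _).trans (hbh₁ x)
  have hGre : ∀ x, (G x).re = ∫ y, (h y).re ∂(kIter P k x) := by
    intro x
    have hint : Integrable h (kIter P k x) :=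
      integrable_of_bdd hh.aestronglyMeasurable hbh
    have h' := integral_re hint
    simp only [RCLike.re_to_complex] at h'
    rw [hGdef, ← h']
  have hGim : ∀ x, (G x).im = ∫ y, (h y).im ∂(kIter P k x) := by
    intro x
    have hint : Integrable h (kIter P k x) :=
      integrable_of_bdd hh.aestronglyMeasurable hbh
    have h' := integral_im hint
    simp only [RCLike.im_to_complex] at h'
    rw [hGdef, ← h']
  have hmulint : ∀ (u v : Ω → ℝ) (Cu Cv : ℝ), Measurable u → Measurable v →
      (∀ ω, |u ω| ≤ Cu) → (∀ ω, |v ω| ≤ Cv) →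
      Integrable (fun ω => u ω * v ω) Pr := by
    intro u v Cu Cv hu hv hbu hbv
    refine integrable_of_bdd (hu.mul hv).aestronglyMeasurable (C := Cu * Cv) ?_
    intro ω
    rw [Real.norm_eq_abs, abs_mul]
    exact mul_le_mul (hbu ω) (hbv ω) (abs_nonneg _) ((abs_nonneg _).trans (hbu ω))
  have hLint : Integrable (fun ω => h₁ (X n ω) * h (X (n + k) ω)) Pr := by
    refine integrable_of_bdd ((hh₁.comp hXn).mul (hh.comp hXm)).aestronglyMeasurable
      (C := C₁ * Ch) ?_
    intro ω
    rw [norm_mul]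
    exact mul_le_mul (hbh₁ (X n ω)) (hbh (X (n + k) ω)) (norm_nonneg _)
      ((norm_nonneg (h₁ (X n ω))).trans (hbh₁ (X n ω)))
  have hRint : Integrable (fun ω => h₁ (X n ω) * G (X n ω)) Pr := by
    refine integrable_of_bdd ((hh₁.comp hXn).aestronglyMeasurable.mul
      ((hG_sm.measurable.comp hXn).aestronglyMeasurable)) (C := C₁ * Ch) ?_
    intro ω
    rw [norm_mul]
    exact mul_le_mul (hbh₁ (X n ω)) (hG_bdd (X n ω)) (norm_nonneg _)
      ((norm_nonneg (h₁ (X n ω))).trans (hbh₁ (X n ω)))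
  have key : ∀ (u v : β → ℝ), Measurable u → Measurable v →
      (∀ x, |u x| ≤ C₁) → (∀ x, |v x| ≤ Ch) →
      ∫ ω, u (X n ω) * v (X (n + k) ω) ∂Pr
        = ∫ ω, u (X n ω) * (∫ y, v y ∂(kIter P k (X n ω))) ∂Pr :=
    fun u v hu hv hbu hbv => markov_iter hchain k n v u hv hu Ch C₁ hbv hbu
  have Irr : Integrable (fun ω => (h₁ (X n ω)).re * (h (X (n + k) ω)).re) Pr :=
    hmulint _ _ C₁ Ch (hr₁.comp hXn) (hr.comp hXm) (fun ω => hbr₁ _) (fun ω => hbr _)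
  have Iss : Integrable (fun ω => (h₁ (X n ω)).im * (h (X (n + k) ω)).im) Pr :=
    hmulint _ _ C₁ Ch (hs₁.comp hXn) (hs.comp hXm) (fun ω => hbs₁ _) (fun ω => hbs _)
  have Irs : Integrable (fun ω => (h₁ (X n ω)).re * (h (X (n + k) ω)).im) Pr :=
    hmulint _ _ C₁ Ch (hr₁.comp hXn) (hs.comp hXm) (fun ω => hbr₁ _) (fun ω => hbs _)
  have Isr : Integrable (fun ω => (h₁ (X n ω)).im * (h (X (n + k) ω)).re) Pr :=
    hmulint _ _ C₁ Ch (hs₁.comp hXn) (hr.comp hXm) (fun ω => hbs₁ _) (fun ω => hbr _)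
  have hGr : Measurable (fun x => (G x).re) := Complex.measurable_re.comp hG_sm.measurable
  have hGs : Measurable (fun x => (G x).im) := Complex.measurable_im.comp hG_sm.measurable
  have hbGr : ∀ x, |(G x).re| ≤ Ch := fun x => (Complex.abs_re_le_norm _).trans (hG_bdd x)
  have hbGs : ∀ x, |(G x).im| ≤ Ch := fun x => (Complex.abs_im_le_norm _).trans (hG_bdd x)
  have IGrr : Integrable (fun ω => (h₁ (X n ω)).re * (G (X n ω)).re) Pr :=
    hmulint _ _ C₁ Ch (hr₁.comp hXn) (hGr.comp hXn) (fun ω => hbr₁ _) (fun ω => hbGr _)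
  have IGss : Integrable (fun ω => (h₁ (X n ω)).im * (G (X n ω)).im) Pr :=
    hmulint _ _ C₁ Ch (hs₁.comp hXn) (hGs.comp hXn) (fun ω => hbs₁ _) (fun ω => hbGs _)
  have IGrs : Integrable (fun ω => (h₁ (X n ω)).re * (G (X n ω)).im) Pr :=
    hmulint _ _ C₁ Ch (hr₁.comp hXn) (hGs.comp hXn) (fun ω => hbr₁ _) (fun ω => hbGs _)
  have IGsr : Integrable (fun ω => (h₁ (X n ω)).im * (G (X n ω)).re) Pr :=
    hmulint _ _ C₁ Ch (hs₁.comp hXn) (hGr.comp hXn) (fun ω => hbs₁ _) (fun ω => hbGr _)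
  apply Complex.ext
  · have e1 := integral_re hLint
    have e2 := integral_re hRint
    simp only [RCLike.re_to_complex] at e1 e2
    rw [← e1, ← e2]
    simp only [Complex.mul_re]
    rw [integral_sub Irr Iss, integral_sub IGrr IGss,
      key _ _ hr₁ hr hbr₁ hbr, key _ _ hs₁ hs hbs₁ hbs]
    simp only [hGre, hGim]
  · have e1 := integral_im hLint
    have e2 := integral_im hRint
    simp only [RCLike.im_to_complex] at e1 e2
    rw [← e1, ← e2]
    simp only [Complex.mul_im]
    rw [integral_add Irs Isr, integral_add IGrs IGsr,
      key _ _ hr₁ hs hbr₁ hbs, key _ _ hs₁ hr hbs₁ hbr]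
    simp only [hGre, hGim]

end Markov

section Coupling

variable {d : ℕ}
local notation "E" => EuclideanSpace ℝ (Fin d)

lemma coupling_holder_bound {f : E → ℂ} (hf : Measurable f)
    {B H α : ℝ} (hH : 0 ≤ H) (hα : 0 < α) (hα1 : α ≤ 1) (hfB : ∀ x, ‖f x‖ ≤ B)
    (hHol : ∀ x y, ‖f x - f y‖ ≤ H * dist x y ^ α)
    (pp : Measure (E × E)) [IsProbabilityMeasure pp]
    {μ₁ μ₂ : Measure E} (h1 : pp.map Prod.fst = μ₁) (h2 : pp.map Prod.snd = μ₂)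
    (hint : Integrable (fun p : E × E => dist p.1 p.2) pp) :
    ‖(∫ x, f x ∂μ₁) - (∫ x, f x ∂μ₂)‖ ≤ 2 * H * (∫ p : E × E, dist p.1 p.2 ∂pp) ^ α := by
  have i1 : Integrable (fun p : E × E => f p.1) pp :=
    integrable_of_bdd ((hf.comp measurable_fst).aestronglyMeasurable) (fun p => hfB p.1)
  have i2 : Integrable (fun p : E × E => f p.2) pp :=
    integrable_of_bdd ((hf.comp measurable_snd).aestronglyMeasurable) (fun p => hfB p.2)
  have hmd : Measurable (fun p : E × E => dist p.1 p.2) := measurable_fst.dist measurable_snd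
  have hmda : Measurable (fun p : E × E => dist p.1 p.2 ^ α) := hmd.pow_const α
  have hda_int : Integrable (fun p : E × E => dist p.1 p.2 ^ α) pp := by
    refine Integrable.mono' ((integrable_const (1 : ℝ)).add hint)
      hmda.aestronglyMeasurable (Filter.Eventually.of_forall fun p => ?_)
    rw [Real.norm_eq_abs, abs_of_nonneg (Real.rpow_nonneg dist_nonneg _)]
    have := rpow_le_tangent hα hα1 one_pos (dist_nonneg (x := p.1) (y := p.2))
    simpa using this
  set c : ℝ := ∫ p : E × E, dist p.1 p.2 ∂pp with hcdef
  have hcnn : 0 ≤ c := integral_nonneg (fun p => dist_nonneg)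
  have key : ∫ p : E × E, dist p.1 p.2 ^ α ∂pp ≤ 2 * c ^ α := by
    rcases eq_or_lt_of_le hcnn with hc0 | hcpos
    · have hzero : (fun p : E × E => dist p.1 p.2) =ᵐ[pp] 0 :=
        (integral_eq_zero_iff_of_nonneg (fun p => dist_nonneg) hint).mp hc0.symm
      have hzero' : (fun p : E × E => dist p.1 p.2 ^ α) =ᵐ[pp] 0 := by
        filter_upwards [hzero] with p hp
        simp only [Pi.zero_apply] at hp ⊢
        rw [hp, Real.zero_rpow hα.ne']
      rw [integral_congr_ae hzero']
      simp [← hc0, Real.zero_rpow hα.ne']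
    · have hmono : ∫ p : E × E, dist p.1 p.2 ^ α ∂pp
          ≤ ∫ p : E × E, c ^ α + c ^ (α - 1) * dist p.1 p.2 ∂pp := by
        refine integral_mono hda_int ((integrable_const _).add (hint.const_mul _)) ?_
        intro p
        exact rpow_le_tangent hα hα1 hcpos dist_nonneg
      rw [integral_add (integrable_const _) (hint.const_mul _), integral_const,
        integral_const_mul] at hmono
      have : c ^ (α - 1) * c = c ^ α := by
        rw [← Real.rpow_add_one hcpos.ne' (α - 1)]; ring_nf
      simp only [measure_univ, probReal_univ, ENNReal.toReal_one, smul_eq_mul, one_mul, ← hcdef] at hmono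
      rw [this] at hmono
      linarith
  rw [← h1, ← h2, integral_map measurable_fst.aemeasurable hf.aestronglyMeasurable,
    integral_map measurable_snd.aemeasurable hf.aestronglyMeasurable, ← integral_sub i1 i2]
  calc ‖∫ p : E × E, f p.1 - f p.2 ∂pp‖ ≤ ∫ p : E × E, ‖f p.1 - f p.2‖ ∂pp :=
        norm_integral_le_integral_norm _
    _ ≤ ∫ p : E × E, H * dist p.1 p.2 ^ α ∂pp := by
        refine integral_mono (i1.sub i2).norm (hda_int.const_mul _) ?_
        intro p; exact hHol p.1 p.2
    _ = H * ∫ p : E × E, dist p.1 p.2 ^ α ∂pp := integral_const_mul _ _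
    _ ≤ H * (2 * c ^ α) := mul_le_mul_of_nonneg_left key hH
    _ = 2 * H * c ^ α := by ring

lemma w1_holder_bound {f : E → ℂ} (hf : Measurable f)
    {B H α : ℝ} (hH : 0 ≤ H) (hα : 0 < α) (hα1 : α ≤ 1) (hfB : ∀ x, ‖f x‖ ≤ B)
    (hHol : ∀ x y, ‖f x - f y‖ ≤ H * dist x y ^ α)
    (μ₁ μ₂ : Measure E) {c₀ : ℝ} (hc₀ : 0 ≤ c₀) (hW : W1 dist μ₁ μ₂ ≤ c₀)
    (hne : Set.Nonempty { c | ∃ pi : Measure (E × E), IsProbabilityMeasure pi ∧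
      pi.map Prod.fst = μ₁ ∧ pi.map Prod.snd = μ₂ ∧
      Integrable (fun p => dist p.1 p.2) pi ∧ c = ∫ p, dist p.1 p.2 ∂pi }) :
    ‖(∫ x, f x ∂μ₁) - (∫ x, f x ∂μ₂)‖ ≤ 2 * H * c₀ ^ α := by
  refine le_of_forall_pos_le_add ?_
  intro δ hδ
  set ε : ℝ := (δ / (2 * H + 1)) ^ (α⁻¹) with hεdef
  have hd : 0 < δ / (2 * H + 1) := div_pos hδ (by linarith)
  have hε : 0 < ε := Real.rpow_pos_of_pos hd _
  have hεα : ε ^ α = δ / (2 * H + 1) := Real.rpow_inv_rpow hd.le hα.ne'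
  rw [W1] at hW
  obtain ⟨cc, hccm, hlt⟩ := exists_lt_of_csInf_lt hne
    (lt_of_le_of_lt hW (lt_add_of_pos_right _ hε))
  obtain ⟨pp, hpp, h1, h2, hint, hcc⟩ := hccm
  haveI := hpp
  have hcnn : 0 ≤ cc := hcc ▸ integral_nonneg (fun p => dist_nonneg)
  have hb := coupling_holder_bound hf hH hα hα1 hfB hHol pp h1 h2 hint
  rw [← hcc] at hb
  calc ‖(∫ x, f x ∂μ₁) - (∫ x, f x ∂μ₂)‖ ≤ 2 * H * cc ^ α := hb
    _ ≤ 2 * H * (c₀ + ε) ^ α := by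
        refine mul_le_mul_of_nonneg_left ?_ (by linarith)
        exact Real.rpow_le_rpow hcnn hlt.le hα.le
    _ ≤ 2 * H * (c₀ ^ α + ε ^ α) := by
        refine mul_le_mul_of_nonneg_left ?_ (by linarith)
        exact real_rpow_add_le hc₀ hε.le hα.le hα1
    _ = 2 * H * c₀ ^ α + 2 * H * ε ^ α := by ring
    _ ≤ 2 * H * c₀ ^ α + δ := by
        rw [hεα]
        have : 2 * H * (δ / (2 * H + 1)) ≤ δ := by
          rw [div_eq_mul_inv]
          rw [← mul_le_mul_iff_of_pos_right (show (0:ℝ) < 2 * H + 1 by linarith)]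
          field_simp
          nlinarith
        linarith

end Coupling

section Finiteness

variable {Ω : Type*} [MeasurableSpace Ω] {d : ℕ}
local notation "E" => EuclideanSpace ℝ (Fin d)

lemma firstMoment_fin {Pr : Measure Ω} [IsProbabilityMeasure Pr]
    {P : Kernel E E} [IsMarkovKernel P] {X : ℕ → Ω → E}
    (hchain : IsMarkovChain Pr P X) {q : ℝ} (hq : 1 < q)
    (hmom : ∀ n : ℕ, ∫⁻ ω, (‖X n ω‖₊ : ENNReal) ^ q ∂Pr ≤ 1) (k n : ℕ) :
    ∀ᵐ x ∂(Pr.map (X n)), (∫⁻ a : E, (‖a‖₊ : ENNReal) ∂(kIter P k x)) < ⊤ := by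
  have hXn := hchain.meas n
  have hnorm_meas : Measurable fun a : E => (‖a‖₊ : ENNReal) :=
    measurable_nnnorm.coe_nnreal_ennreal
  have hφm : Measurable fun x : E => ∫⁻ a, (‖a‖₊ : ENNReal) ∂(kIter P k x) :=
    Measurable.lintegral_kernel_prod_right (f := fun (_ : E) (a : E) => (‖a‖₊ : ENNReal))
      (hnorm_meas.comp measurable_snd)
  refine ae_lt_top hφm ?_
  rw [lintegral_map hφm hXn]
  refine LT.lt.ne ?_
  have hψmeas : ∀ R : ℕ, Measurable fun x : E =>
      ∫⁻ a, min (‖a‖₊ : ENNReal) (R : ENNReal) ∂(kIter P k x) := fun R =>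
    Measurable.lintegral_kernel_prod_right
      (f := fun (_ : E) (a : E) => min (‖a‖₊ : ENNReal) (R : ENNReal))
      ((hnorm_meas.comp measurable_snd).min measurable_const)
  have hsup : ∀ c : ENNReal, (⨆ R : ℕ, min c (R : ENNReal)) = c := by
    intro c
    apply le_antisymm (iSup_le fun R => min_le_left _ _)
    rcases eq_or_ne c ⊤ with rfl | hc
    · have : ∀ R : ℕ, min (⊤ : ENNReal) (R : ENNReal) = (R : ENNReal) :=
        fun R => min_eq_right le_top
      simp only [this]
      rw [ENNReal.iSup_natCast]
    · obtain ⟨R, hR⟩ := ENNReal.exists_nat_gt hc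
      exact le_iSup_of_le R (le_of_eq (min_eq_left hR.le).symm)
  have hminle : ∀ (R : ℕ) (x : E), min (‖x‖₊ : ENNReal) ((R : ℕ) : ENNReal)
      ≤ 1 + (‖x‖₊ : ENNReal) ^ q := by
    intro R x
    rcases le_total ((‖x‖₊ : ENNReal)) 1 with h | h
    · exact (min_le_left _ _).trans (h.trans le_self_add)
    · refine (min_le_left _ _).trans ?_
      calc (‖x‖₊ : ENNReal) = (‖x‖₊ : ENNReal) ^ (1 : ℝ) := (ENNReal.rpow_one _).symm
        _ ≤ (‖x‖₊ : ENNReal) ^ q := ENNReal.rpow_le_rpow_of_exponent_le h hq.le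
        _ ≤ 1 + (‖x‖₊ : ENNReal) ^ q := le_add_self
  have keyR : ∀ R : ℕ, ∫⁻ ω, (∫⁻ a, min (‖a‖₊ : ENNReal) (R : ENNReal)
      ∂(kIter P k (X n ω))) ∂Pr ≤ 2 := by
    intro R
    have hRreal : (0 : ℝ) ≤ (R : ℝ) := Nat.cast_nonneg R
    set hR : E → ℝ := fun a => min ‖a‖ (R : ℝ) with hRdef
    have hhRm : Measurable hR := measurable_norm.min measurable_const
    have hhRnn : ∀ a, 0 ≤ hR a := fun a => le_min (norm_nonneg a) hRreal
    have hhRb : ∀ a, |hR a| ≤ (R : ℝ) := fun a => by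
      rw [abs_of_nonneg (hhRnn a)]; exact min_le_right _ _
    have hmk := markov_iter hchain k n hR (fun _ => 1) hhRm measurable_const
      (R : ℝ) 1 hhRb (fun _ => by norm_num)
    simp only [one_mul] at hmk
    have hofmin : ∀ a : E, ENNReal.ofReal (hR a)
        = min (‖a‖₊ : ENNReal) (R : ENNReal) := by
      intro a
      have hmono' : Monotone ENNReal.ofReal := fun _ _ h => ENNReal.ofReal_le_ofReal h
      rw [hRdef]
      show ENNReal.ofReal (min ‖a‖ (R : ℝ)) = _
      rw [hmono'.map_min, ofReal_norm_eq_coe_nnnorm, ENNReal.ofReal_natCast]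
    have hpsi : ∀ x : E, (∫⁻ a, min (‖a‖₊ : ENNReal) (R : ENNReal) ∂(kIter P k x))
        = ENNReal.ofReal (∫ y, hR y ∂(kIter P k x)) := by
      intro x
      rw [ofReal_integral_eq_lintegral_ofReal
        (integrable_of_bdd hhRm.aestronglyMeasurable (C := (R : ℝ))
          (by simpa [Real.norm_eq_abs] using hhRb))
        (Filter.Eventually.of_forall hhRnn)]
      exact lintegral_congr fun a => (hofmin a).symm
    have hint2 : Integrable (fun ω => ∫ y, hR y ∂(kIter P k (X n ω))) Pr := by
      refine integrable_of_bdd (((kIterInt_sm P k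
        hhRm.stronglyMeasurable).measurable.comp hXn).aestronglyMeasurable)
        (C := (R : ℝ)) ?_
      intro ω
      exact norm_integral_le_of_bdd (by simpa [Real.norm_eq_abs] using hhRb)
    have hint3 : Integrable (fun ω => hR (X (n + k) ω)) Pr :=
      integrable_of_bdd ((hhRm.comp (hchain.meas (n + k))).aestronglyMeasurable)
        (C := (R : ℝ)) (by simpa [Real.norm_eq_abs] using fun ω => hhRb (X (n + k) ω))
    calc ∫⁻ ω, (∫⁻ a, min (‖a‖₊ : ENNReal) (R : ENNReal) ∂(kIter P k (X n ω))) ∂Pr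
        = ∫⁻ ω, ENNReal.ofReal (∫ y, hR y ∂(kIter P k (X n ω))) ∂Pr :=
          lintegral_congr fun ω => hpsi _
      _ = ENNReal.ofReal (∫ ω, (∫ y, hR y ∂(kIter P k (X n ω))) ∂Pr) :=
          (ofReal_integral_eq_lintegral_ofReal hint2 (Filter.Eventually.of_forall
            fun ω => integral_nonneg hhRnn)).symm
      _ = ENNReal.ofReal (∫ ω, hR (X (n + k) ω) ∂Pr) := by rw [← hmk]
      _ = ∫⁻ ω, ENNReal.ofReal (hR (X (n + k) ω)) ∂Pr :=
          ofReal_integral_eq_lintegral_ofReal hint3 (Filter.Eventually.of_forall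
            fun ω => hhRnn _)
      _ = ∫⁻ ω, min (‖X (n + k) ω‖₊ : ENNReal) (R : ENNReal) ∂Pr :=
          lintegral_congr fun ω => hofmin _
      _ ≤ ∫⁻ ω, (1 + (‖X (n + k) ω‖₊ : ENNReal) ^ q) ∂Pr :=
          lintegral_mono fun ω => hminle R _
      _ = 1 + ∫⁻ ω, (‖X (n + k) ω‖₊ : ENNReal) ^ q ∂Pr := by
          rw [lintegral_add_left measurable_const]
          simp
      _ ≤ 1 + 1 := by
          exact add_le_add le_rfl (hmom (n + k))
      _ = 2 := by norm_num
  calc ∫⁻ ω, (∫⁻ a, (‖a‖₊ : ENNReal) ∂(kIter P k (X n ω))) ∂Pr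
      = ∫⁻ ω, ⨆ R : ℕ, (∫⁻ a, min (‖a‖₊ : ENNReal) (R : ENNReal)
          ∂(kIter P k (X n ω))) ∂Pr := by
        refine lintegral_congr fun ω => ?_
        rw [← lintegral_iSup (fun R => (hnorm_meas.min measurable_const))
          (fun R S hRS a => min_le_min le_rfl (by exact_mod_cast hRS))]
        exact lintegral_congr fun a => (hsup _).symm
    _ = ⨆ R : ℕ, ∫⁻ ω, (∫⁻ a, min (‖a‖₊ : ENNReal) (R : ENNReal)
          ∂(kIter P k (X n ω))) ∂Pr := by
        refine lintegral_iSup (fun R => (hψmeas R).comp hXn) ?_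
        intro R S hRS ω
        exact lintegral_mono fun a => min_le_min le_rfl (by exact_mod_cast hRS)
    _ ≤ 2 := iSup_le keyR
    _ < ⊤ := by norm_num

end Finiteness
section Main

variable {Ω : Type*} [MeasurableSpace Ω] {d : ℕ}
local notation "E" => EuclideanSpace ℝ (Fin d)

lemma cov_aux (Pr : Measure Ω) [IsProbabilityMeasure Pr]
    (P : Kernel E E) [IsMarkovKernel P]
    (X : ℕ → Ω → E) (hchain : IsMarkovChain Pr P X)
    (D κ : ℝ) (hD : 1 ≤ D) (hκ : κ ∈ Set.Ioo (0 : ℝ) 1)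
    (hcontr : ∀ (n : ℕ) (x y : E),
      W1 dist (kIter P n x) (kIter P n y) ≤ D * κ ^ n * dist x y)
    (q : ℝ) (hq : 1 < q)
    (hmom : ∀ n : ℕ, ∫⁻ ω, (‖X n ω‖₊ : ENNReal) ^ q ∂Pr ≤ 1)
    (α : ℝ) (hα : α ∈ Set.Ioc (0 : ℝ) 1)
    (f : E → ℂ) (hf_meas : Measurable f)
    (B : ℝ) (hfB : ∀ x, ‖f x‖ ≤ B)
    (H : ℝ) (hH : 0 ≤ H)
    (hHol : ∀ x y, ‖f x - f y‖ ≤ H * dist x y ^ α)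
    (n k : ℕ) :
    ‖(∫ ω, f (X n ω) * f (X (n + k) ω) ∂Pr) -
        (∫ ω, f (X n ω) ∂Pr) * (∫ ω, f (X (n + k) ω) ∂Pr)‖
      ≤ 8 * D ^ α * κ ^ (α * (k : ℝ)) * B * H := by
  obtain ⟨hα0, hα1⟩ := hα
  obtain ⟨hκ0, hκ1⟩ := hκ
  have hD0 : (0 : ℝ) < D := lt_of_lt_of_le one_pos hD
  have hq0 : (0 : ℝ) ≤ q := by linarith
  have hB0 : 0 ≤ B := (norm_nonneg (f 0)).trans (hfB 0)
  have hXn := hchain.meas n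
  set ν : Measure E := Pr.map (X n) with hν
  haveI : IsProbabilityMeasure ν := Measure.isProbabilityMeasure_map hXn.aemeasurable
  set G : E → ℂ := fun x => ∫ y, f y ∂(kIter P k x) with hGdef
  have hG_sm : StronglyMeasurable G := kIterInt_sm P k hf_meas.stronglyMeasurable
  have hG_m : Measurable G := hG_sm.measurable
  have hG_bdd : ∀ x, ‖G x‖ ≤ B := fun x => norm_integral_le_of_bdd hfB
  have step1 : ∫ ω, f (X n ω) * f (X (n + k) ω) ∂Pr
      = ∫ ω, f (X n ω) * G (X n ω) ∂Pr :=
    markov_iter_complex hchain k n f f hf_meas hf_meas B B hfB hfB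
  have step2 : ∫ ω, f (X (n + k) ω) ∂Pr = ∫ ω, G (X n ω) ∂Pr := by
    have := markov_iter_complex hchain k n f (fun _ => 1) hf_meas measurable_const
      B 1 hfB (fun _ => by norm_num)
    simpa using this
  have cv : ∀ (g : E → ℂ), Measurable g →
      ∫ ω, g (X n ω) ∂Pr = ∫ x, g x ∂ν := fun g hg =>
    (integral_map hXn.aemeasurable hg.aestronglyMeasurable).symm
  rw [step1, step2, cv (fun x => f x * G x) (hf_meas.mul hG_m), cv _ hf_meas, cv _ hG_m]
  -- pass to the product measure
  have hmapfst : (ν.prod ν).map Prod.fst = ν := by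
    rw [Measure.map_fst_prod]; simp
  have hmapsnd : (ν.prod ν).map Prod.snd = ν := by
    rw [Measure.map_snd_prod]; simp
  have Ia : Integrable (fun p : E × E => f p.1 * G p.1) (ν.prod ν) := by
    refine integrable_of_bdd (((hf_meas.mul hG_m).comp
      measurable_fst).aestronglyMeasurable) (C := B * B) ?_
    intro p
    rw [norm_mul]
    exact mul_le_mul (hfB _) (hG_bdd _) (norm_nonneg _) hB0
  have Ib : Integrable (fun p : E × E => f p.1 * G p.2) (ν.prod ν) := by
    refine integrable_of_bdd (((hf_meas.comp measurable_fst).mul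
      (hG_m.comp measurable_snd)).aestronglyMeasurable) (C := B * B) ?_
    intro p
    rw [norm_mul]
    exact mul_le_mul (hfB _) (hG_bdd _) (norm_nonneg _) hB0
  have prod1 : ∫ p : E × E, f p.1 * G p.1 ∂(ν.prod ν) = ∫ x, f x * G x ∂ν := by
    conv_rhs => rw [← hmapfst]
    rw [integral_map (f := fun x => f x * G x) measurable_fst.aemeasurable
      (hf_meas.mul hG_m).aestronglyMeasurable]
  have prod2 : ∫ p : E × E, f p.1 * G p.2 ∂(ν.prod ν)
      = (∫ x, f x ∂ν) * (∫ x, G x ∂ν) := integral_prod_mul f G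
  have main_eq : (∫ x, f x * G x ∂ν) - (∫ x, f x ∂ν) * (∫ x, G x ∂ν)
      = ∫ p : E × E, (f p.1 * G p.1 - f p.1 * G p.2) ∂(ν.prod ν) := by
    rw [integral_sub Ia Ib, prod1, prod2]
  rw [main_eq]
  -- the a.e. pointwise bound
  have hfin := firstMoment_fin hchain hq hmom k n
  rw [← hν] at hfin
  have hfin1 : ∀ᵐ p : E × E ∂(ν.prod ν),
      (∫⁻ a : E, (‖a‖₊ : ENNReal) ∂(kIter P k p.1)) < ⊤ := by
    rw [← hmapfst] at hfin
    exact ae_of_ae_map measurable_fst.aemeasurable hfin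
  have hfin2 : ∀ᵐ p : E × E ∂(ν.prod ν),
      (∫⁻ a : E, (‖a‖₊ : ENNReal) ∂(kIter P k p.2)) < ⊤ := by
    rw [← hmapsnd] at hfin
    exact ae_of_ae_map measurable_snd.aemeasurable hfin
  have hmd : Measurable (fun p : E × E => dist p.1 p.2) :=
    measurable_fst.dist measurable_snd
  have hae : ∀ᵐ p : E × E ∂(ν.prod ν), ‖f p.1 * G p.1 - f p.1 * G p.2‖
      ≤ B * (2 * H * ((D * κ ^ k) ^ α * dist p.1 p.2 ^ α)) := by
    filter_upwards [hfin1, hfin2] with p h1 h2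
    -- build a coupling with integrable cost: the product coupling
    set pp : Measure (E × E) := (kIter P k p.1).prod (kIter P k p.2) with hppdef
    haveI : IsProbabilityMeasure pp := by rw [hppdef]; infer_instance
    have hppfst : pp.map Prod.fst = kIter P k p.1 := by
      rw [hppdef, Measure.map_fst_prod]; simp
    have hppsnd : pp.map Prod.snd = kIter P k p.2 := by
      rw [hppdef, Measure.map_snd_prod]; simp
    have hcost : Integrable (fun r : E × E => dist r.1 r.2) pp := by
      refine ⟨hmd.aestronglyMeasurable, ?_⟩
      show (∫⁻ r : E × E, (‖dist r.1 r.2‖₊ : ENNReal) ∂pp) < ⊤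
      calc ∫⁻ r : E × E, (‖dist r.1 r.2‖₊ : ENNReal) ∂pp
          ≤ ∫⁻ r : E × E, ((‖r.1‖₊ : ENNReal) + (‖r.2‖₊ : ENNReal)) ∂pp := by
            refine lintegral_mono fun r => ?_
            rw [← ofReal_norm_eq_coe_nnnorm, ← ofReal_norm_eq_coe_nnnorm,
              ← ofReal_norm_eq_coe_nnnorm, ← ENNReal.ofReal_add (norm_nonneg _)
              (norm_nonneg _)]
            refine ENNReal.ofReal_le_ofReal ?_
            rw [Real.norm_eq_abs, abs_of_nonneg dist_nonneg]
            exact dist_le_norm_add_norm _ _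
        _ = (∫⁻ r : E × E, (‖r.1‖₊ : ENNReal) ∂pp)
            + ∫⁻ r : E × E, (‖r.2‖₊ : ENNReal) ∂pp :=
            lintegral_add_left (measurable_nnnorm.coe_nnreal_ennreal.comp
              measurable_fst) _
        _ < ⊤ := by
            have e1 : ∫⁻ r : E × E, (‖r.1‖₊ : ENNReal) ∂pp
                = ∫⁻ a : E, (‖a‖₊ : ENNReal) ∂(kIter P k p.1) := by
              rw [← hppfst, lintegral_map measurable_nnnorm.coe_nnreal_ennreal
                measurable_fst]
            have e2 : ∫⁻ r : E × E, (‖r.2‖₊ : ENNReal) ∂pp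
                = ∫⁻ a : E, (‖a‖₊ : ENNReal) ∂(kIter P k p.2) := by
              rw [← hppsnd, lintegral_map measurable_nnnorm.coe_nnreal_ennreal
                measurable_snd]
            rw [e1, e2]
            exact ENNReal.add_lt_top.mpr ⟨h1, h2⟩
    have hne : Set.Nonempty { c | ∃ pi : Measure (E × E), IsProbabilityMeasure pi ∧
        pi.map Prod.fst = kIter P k p.1 ∧ pi.map Prod.snd = kIter P k p.2 ∧
        Integrable (fun r => dist r.1 r.2) pi ∧ c = ∫ r, dist r.1 r.2 ∂pi } :=
      ⟨∫ r : E × E, dist r.1 r.2 ∂pp, pp, inferInstance, hppfst, hppsnd, hcost, rfl⟩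
    have hc₀ : (0 : ℝ) ≤ D * κ ^ k * dist p.1 p.2 := by positivity
    have hGd := w1_holder_bound hf_meas hH hα0 hα1 hfB hHol
      (kIter P k p.1) (kIter P k p.2) hc₀ (hcontr k p.1 p.2) hne
    have hrw : (D * κ ^ k * dist p.1 p.2) ^ α
        = (D * κ ^ k) ^ α * dist p.1 p.2 ^ α :=
      Real.mul_rpow (by positivity) dist_nonneg
    rw [hrw] at hGd
    have hGd' : ‖G p.1 - G p.2‖
        ≤ 2 * H * ((D * κ ^ k) ^ α * dist p.1 p.2 ^ α) := by
      rw [hGdef]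
      exact hGd
    rw [← mul_sub, norm_mul]
    exact mul_le_mul (hfB _) hGd' (norm_nonneg _) hB0
  -- integrability of the q-th moments under ν
  have hnq_meas : Measurable (fun x : E => ‖x‖ ^ q) :=
    measurable_norm.pow_const q
  have hlintq : ∫⁻ x, ENNReal.ofReal (‖x‖ ^ q) ∂ν ≤ 1 := by
    have hpt : ∀ x : E, ENNReal.ofReal (‖x‖ ^ q) = (‖x‖₊ : ENNReal) ^ q := by
      intro x
      rw [← ofReal_norm_eq_coe_nnnorm, ← ENNReal.ofReal_rpow_of_nonneg
        (norm_nonneg x) hq0]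
    calc ∫⁻ x, ENNReal.ofReal (‖x‖ ^ q) ∂ν = ∫⁻ x, (‖x‖₊ : ENNReal) ^ q ∂ν :=
          lintegral_congr fun x => hpt x
      _ = ∫⁻ ω, (‖X n ω‖₊ : ENNReal) ^ q ∂Pr := by
          rw [hν, lintegral_map (measurable_nnnorm.coe_nnreal_ennreal.pow_const q) hXn]
      _ ≤ 1 := hmom n
  have hIq : Integrable (fun x : E => ‖x‖ ^ q) ν := by
    refine ⟨hnq_meas.aestronglyMeasurable, ?_⟩
    show (∫⁻ x, (‖(‖x‖ ^ q)‖₊ : ENNReal) ∂ν) < ⊤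
    calc ∫⁻ x, (‖(‖x‖ ^ q)‖₊ : ENNReal) ∂ν
        = ∫⁻ x, ENNReal.ofReal (‖x‖ ^ q) ∂ν := by
          refine lintegral_congr fun x => ?_
          rw [← ofReal_norm_eq_coe_nnnorm, Real.norm_of_nonneg
            (Real.rpow_nonneg (norm_nonneg x) q)]
      _ ≤ 1 := hlintq
      _ < ⊤ := by norm_num
  have hIq_le : ∫ x, ‖x‖ ^ q ∂ν ≤ 1 := by
    have := ofReal_integral_eq_lintegral_ofReal hIq
      (Filter.Eventually.of_forall fun x => Real.rpow_nonneg (norm_nonneg x) q)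
    have h1 : ENNReal.ofReal (∫ x, ‖x‖ ^ q ∂ν) ≤ 1 := this ▸ hlintq
    rwa [ENNReal.ofReal_le_one] at h1
  have hIq1 : Integrable (fun p : E × E => ‖p.1‖ ^ q) (ν.prod ν) := by
    have h := hIq
    rw [← hmapfst] at h
    exact (integrable_map_measure hnq_meas.aestronglyMeasurable
      measurable_fst.aemeasurable).mp h
  have hIq2 : Integrable (fun p : E × E => ‖p.2‖ ^ q) (ν.prod ν) := by
    have h := hIq
    rw [← hmapsnd] at h
    exact (integrable_map_measure hnq_meas.aestronglyMeasurable
      measurable_snd.aemeasurable).mp h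
  have hIq1_le : ∫ p : E × E, ‖p.1‖ ^ q ∂(ν.prod ν) ≤ 1 := by
    have : ∫ p : E × E, ‖p.1‖ ^ q ∂(ν.prod ν) = ∫ x, ‖x‖ ^ q ∂ν := by
      conv_rhs => rw [← hmapfst]
      rw [integral_map measurable_fst.aemeasurable hnq_meas.aestronglyMeasurable]
    rw [this]; exact hIq_le
  have hIq2_le : ∫ p : E × E, ‖p.2‖ ^ q ∂(ν.prod ν) ≤ 1 := by
    have : ∫ p : E × E, ‖p.2‖ ^ q ∂(ν.prod ν) = ∫ x, ‖x‖ ^ q ∂ν := by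
      conv_rhs => rw [← hmapsnd]
      rw [integral_map measurable_snd.aemeasurable hnq_meas.aestronglyMeasurable]
    rw [this]; exact hIq_le
  -- integrability of dist^α
  have hdα_pt : ∀ p : E × E, dist p.1 p.2 ^ α ≤ 2 + (‖p.1‖ ^ q + ‖p.2‖ ^ q) := by
    intro p
    calc dist p.1 p.2 ^ α ≤ (‖p.1‖ + ‖p.2‖) ^ α :=
          Real.rpow_le_rpow dist_nonneg (dist_le_norm_add_norm _ _) hα0.le
      _ ≤ ‖p.1‖ ^ α + ‖p.2‖ ^ α :=
          real_rpow_add_le (norm_nonneg _) (norm_nonneg _) hα0.le hα1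
      _ ≤ (1 + ‖p.1‖ ^ q) + (1 + ‖p.2‖ ^ q) := by
          gcongr <;> exact rpow_le_one_add_rpow (norm_nonneg _) hα0 (by linarith)
      _ = 2 + (‖p.1‖ ^ q + ‖p.2‖ ^ q) := by ring
  have hIqsum : Integrable (fun p : E × E => ‖p.1‖ ^ q + ‖p.2‖ ^ q) (ν.prod ν) :=
    hIq1.add hIq2
  have hdom : Integrable (fun p : E × E => 2 + (‖p.1‖ ^ q + ‖p.2‖ ^ q)) (ν.prod ν) :=
    (integrable_const 2).add hIqsum
  have hdα_meas : Measurable (fun p : E × E => dist p.1 p.2 ^ α) := hmd.pow_const α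
  have hdα_int : Integrable (fun p : E × E => dist p.1 p.2 ^ α) (ν.prod ν) := by
    refine Integrable.mono' hdom
      hdα_meas.aestronglyMeasurable (Filter.Eventually.of_forall fun p => ?_)
    rw [Real.norm_of_nonneg (Real.rpow_nonneg dist_nonneg α)]
    exact hdα_pt p
  have hdα_le : ∫ p : E × E, dist p.1 p.2 ^ α ∂(ν.prod ν) ≤ 4 := by
    calc ∫ p : E × E, dist p.1 p.2 ^ α ∂(ν.prod ν)
        ≤ ∫ p : E × E, (2 + (‖p.1‖ ^ q + ‖p.2‖ ^ q)) ∂(ν.prod ν) :=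
          integral_mono hdα_int hdom (fun p => hdα_pt p)
      _ = 2 + (∫ p : E × E, ‖p.1‖ ^ q ∂(ν.prod ν)
            + ∫ p : E × E, ‖p.2‖ ^ q ∂(ν.prod ν)) := by
          rw [integral_add (integrable_const 2) hIqsum,
            integral_add hIq1 hIq2, integral_const]
          simp
      _ ≤ 2 + (1 + 1) := by
          have := add_le_add hIq1_le hIq2_le
          linarith
      _ = 4 := by norm_num
  -- putting everything together
  have hnorm_int : Integrable (fun p : E × E =>
      ‖f p.1 * G p.1 - f p.1 * G p.2‖) (ν.prod ν) := (Ia.sub Ib).norm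
  have hKnn : 0 ≤ B * (2 * H * (D * κ ^ k) ^ α) := by positivity
  calc ‖∫ p : E × E, (f p.1 * G p.1 - f p.1 * G p.2) ∂(ν.prod ν)‖
      ≤ ∫ p : E × E, ‖f p.1 * G p.1 - f p.1 * G p.2‖ ∂(ν.prod ν) :=
        norm_integral_le_integral_norm _
    _ ≤ ∫ p : E × E, B * (2 * H * ((D * κ ^ k) ^ α * dist p.1 p.2 ^ α)) ∂(ν.prod ν) := by
        refine integral_mono_ae hnorm_int ?_ hae
        have : Integrable (fun p : E × E =>
            B * (2 * H * ((D * κ ^ k) ^ α * dist p.1 p.2 ^ α))) (ν.prod ν) := by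
          simp_rw [show ∀ p : E × E, B * (2 * H * ((D * κ ^ k) ^ α * dist p.1 p.2 ^ α))
            = (B * (2 * H * (D * κ ^ k) ^ α)) * dist p.1 p.2 ^ α from fun p => by ring]
          exact hdα_int.const_mul _
        exact this
    _ = B * (2 * H * (D * κ ^ k) ^ α) * ∫ p : E × E, dist p.1 p.2 ^ α ∂(ν.prod ν) := by
        rw [show (fun p : E × E => B * (2 * H * ((D * κ ^ k) ^ α * dist p.1 p.2 ^ α)))
          = (fun p : E × E => (B * (2 * H * (D * κ ^ k) ^ α)) * dist p.1 p.2 ^ α)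
          from funext fun p => by ring]
        exact integral_const_mul _ _
    _ ≤ B * (2 * H * (D * κ ^ k) ^ α) * 4 :=
        mul_le_mul_of_nonneg_left hdα_le hKnn
    _ = 8 * D ^ α * κ ^ (α * (k : ℝ)) * B * H := by
        rw [Real.mul_rpow hD0.le (pow_nonneg hκ0.le k),
          ← Real.rpow_natCast κ k, ← Real.rpow_mul hκ0.le, mul_comm (k : ℝ) α]
        ring

end Main

/-- **Lemma (covariance decay for Hölder functions).** For an exponentially
`W₁`-contracting Markov chain on `ℝ^d` with `q`-th moments bounded by 1 (for the chain,
the initial distribution and the invariant measure), every bounded `α`-Hölder function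
`f` with sup-norm bound `B` and Hölder constant `H` satisfies
`|Cov(f(X_n), f(X_m))| ≤ 8 D^α κ^(α|m-n|) B H`. -/
theorem covariance_decay_of_holder {Ω : Type*} [MeasurableSpace Ω]
    (Pr : Measure Ω) [IsProbabilityMeasure Pr] (d : ℕ)
    (P : Kernel (EuclideanSpace ℝ (Fin d)) (EuclideanSpace ℝ (Fin d))) [IsMarkovKernel P]
    (X : ℕ → Ω → EuclideanSpace ℝ (Fin d)) (hchain : IsMarkovChain Pr P X)
    (D κ : ℝ) (hD : 1 ≤ D) (hκ : κ ∈ Set.Ioo (0 : ℝ) 1)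
    -- Assumption 1: W₁(Pⁿ(x,·), Pⁿ(y,·)) ≤ D κⁿ |x - y|
    (hcontr : ∀ (n : ℕ) (x y : EuclideanSpace ℝ (Fin d)),
      W1 dist (kIter P n x) (kIter P n y) ≤ D * κ ^ n * dist x y)
    (q : ℝ) (hq : 1 < q)
    -- Assumption 2 with M = 1: sup_n (E |X_n|^q)^(1/q) ≤ 1
    (hmom : ∀ n : ℕ, ∫⁻ ω, (‖X n ω‖₊ : ENNReal) ^ q ∂Pr ≤ 1)
    (μ : Measure (EuclideanSpace ℝ (Fin d))) [IsProbabilityMeasure μ] (hinv : μ.bind P = μ)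
    -- the invariant measure satisfies the same moment bound
    (hmomμ : ∫⁻ x, (‖x‖₊ : ENNReal) ^ q ∂μ ≤ 1)
    (α : ℝ) (hα : α ∈ Set.Ioc (0 : ℝ) 1)
    (f : EuclideanSpace ℝ (Fin d) → ℂ) (hf_meas : Measurable f)
    -- f is bounded by B
    (B : ℝ) (hfB : ∀ x, ‖f x‖ ≤ B)
    -- f is α-Hölder with constant H
    (H : ℝ) (hH : 0 ≤ H)
    (hHol : ∀ x y, ‖f x - f y‖ ≤ H * dist x y ^ α)
    (m n : ℕ) :
    ‖(∫ ω, f (X n ω) * f (X m ω) ∂Pr) -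
        (∫ ω, f (X n ω) ∂Pr) * (∫ ω, f (X m ω) ∂Pr)‖
      ≤ 8 * D ^ α * κ ^ (α * |(m : ℝ) - n|) * B * H := by
  rcases le_total n m with h | h
  · have haux := cov_aux Pr P X hchain D κ hD hκ hcontr q hq hmom α hα f hf_meas
      B hfB H hH hHol n (m - n)
    rw [show n + (m - n) = m from by omega] at haux
    have habs : |(m : ℝ) - (n : ℝ)| = ((m - n : ℕ) : ℝ) := by
      rw [abs_of_nonneg (sub_nonneg.mpr (Nat.cast_le.mpr h)), Nat.cast_sub h]
    rw [habs]
    exact haux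
  · have haux := cov_aux Pr P X hchain D κ hD hκ hcontr q hq hmom α hα f hf_meas
      B hfB H hH hHol m (n - m)
    rw [show m + (n - m) = n from by omega] at haux
    have habs : |(m : ℝ) - (n : ℝ)| = ((n - m : ℕ) : ℝ) := by
      rw [abs_sub_comm, abs_of_nonneg (sub_nonneg.mpr (Nat.cast_le.mpr h)), Nat.cast_sub h]
    rw [habs]
    have hcomm1 : (∫ ω, f (X n ω) * f (X m ω) ∂Pr) = ∫ ω, f (X m ω) * f (X n ω) ∂Pr :=
      integral_congr_ae (Filter.Eventually.of_forall fun ω => mul_comm _ _)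
    rw [hcomm1, mul_comm (∫ ω, f (X n ω) ∂Pr)]
    exact haux
end

section
/- Let (X_n) be a Markov chain on a Polish metric space (𝒳, d) with diam(𝒳) ≤ 1 and transition kernel P satisfying W₁(P(x,·), P(y,·)) ≤ κ d(x,y) for all x,y, with κ ∈ (0,1). Let μ be the invariant measure, μ_n the empirical measure, and f(x₁,…,x_n) = W₁(μ, (1/n) Σ_k δ_{x_k}). For 1 ≤ k ≤ n and x₁,…,x_{k−1} ∈ 𝒳 define Δ_k(x₁,…,x_k) = E[f(X₁,…,X_n) | X₁=x₁,…,X_k=x_k] − E[f(X₁,…,X_n) | X₁=x₁,…,X_{k−1}=x_{k−1}]. Then for all x, y ∈ 𝒳, |Δ_k(x₁,…,x_{k−1}, x) − Δ_k(x₁,…,x_{k−1}, y)| ≤ (1/n) ( Σ_{j=0}^{n−k} κ^j ) d(x,y) ≤ d(x,y) / (n(1−κ)). -/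
open MeasureTheory ProbabilityTheory Real

/-- The law of the trajectory `(X₀, X₁, …, X_n)` of the Markov chain with kernel `P`
started at the deterministic point `x`. -/
noncomputable def trajMeasure {β : Type*} [MeasurableSpace β] (P : Kernel β β) :
    (n : ℕ) → β → Measure (Fin (n + 1) → β)
  | 0, x => Measure.dirac (fun _ => x)
  | n + 1, x => (trajMeasure P n x).bind
      (fun v => (P (v (Fin.last n))).map (fun y => Fin.snoc v y))

set_option linter.unusedSectionVars false

section W1aux
variable {𝒳 : Type*} [MetricSpace 𝒳] [SecondCountableTopology 𝒳]
  [MeasurableSpace 𝒳] [BorelSpace 𝒳]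

def Cpl (μ ν : Measure 𝒳) : Set ℝ :=
  { c | ∃ pi : Measure (𝒳 × 𝒳), IsProbabilityMeasure pi ∧
    pi.map Prod.fst = μ ∧ pi.map Prod.snd = ν ∧
    Integrable (fun p => dist p.1 p.2) pi ∧ c = ∫ p, dist p.1 p.2 ∂pi }

lemma W1_eq (μ ν : Measure 𝒳) : W1 dist μ ν = sInf (Cpl μ ν) := rfl

lemma intble_of_bounded {α : Type*} [MeasurableSpace α] {ν : Measure α} [IsFiniteMeasure ν]
    {f : α → ℝ} (hf : AEStronglyMeasurable f ν) {C : ℝ} (hC : ∀ a, |f a| ≤ C) :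
    Integrable f ν :=
  ⟨hf, HasFiniteIntegral.of_bounded (C := C) (Filter.Eventually.of_forall (fun a => by
    simpa [Real.norm_eq_abs] using hC a))⟩

lemma measurable_dist' : Measurable (fun p : 𝒳 × 𝒳 => dist p.1 p.2) :=
  continuous_dist.measurable

lemma intble_dist {pi : Measure (𝒳 × 𝒳)} [IsFiniteMeasure pi]
    (hdiam : ∀ x y : 𝒳, dist x y ≤ 1) :
    Integrable (fun p : 𝒳 × 𝒳 => dist p.1 p.2) pi :=
  intble_of_bounded measurable_dist'.aestronglyMeasurable
    (C := 1) (fun p => by rw [abs_of_nonneg dist_nonneg]; exact hdiam _ _)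

lemma Cpl_nonneg {μ ν : Measure 𝒳} {c : ℝ} (hc : c ∈ Cpl μ ν) : 0 ≤ c := by
  obtain ⟨pi, _, _, _, _, rfl⟩ := hc
  exact integral_nonneg (fun p => dist_nonneg)

lemma Cpl_bddBelow (μ ν : Measure 𝒳) : BddBelow (Cpl μ ν) :=
  ⟨0, fun c hc => Cpl_nonneg hc⟩

lemma prod_cost_mem_Cpl (hdiam : ∀ x y : 𝒳, dist x y ≤ 1) (μ ν : Measure 𝒳)
    [IsProbabilityMeasure μ] [IsProbabilityMeasure ν] :
    (∫ p, dist p.1 p.2 ∂(μ.prod ν)) ∈ Cpl μ ν := by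
  exact ⟨μ.prod ν, inferInstance, by simp, by simp, intble_dist hdiam, rfl⟩

lemma Cpl_nonempty (hdiam : ∀ x y : 𝒳, dist x y ≤ 1) (μ ν : Measure 𝒳)
    [IsProbabilityMeasure μ] [IsProbabilityMeasure ν] :
    (Cpl μ ν).Nonempty := ⟨_, prod_cost_mem_Cpl hdiam μ ν⟩

lemma W1_nonneg (hdiam : ∀ x y : 𝒳, dist x y ≤ 1) (μ ν : Measure 𝒳)
    [IsProbabilityMeasure μ] [IsProbabilityMeasure ν] :
    0 ≤ W1 dist μ ν :=
  le_csInf (Cpl_nonempty hdiam μ ν) (fun _c hc => Cpl_nonneg hc)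

lemma W1_le_of_mem {μ ν : Measure 𝒳} {c : ℝ} (hc : c ∈ Cpl μ ν) : W1 dist μ ν ≤ c :=
  csInf_le (Cpl_bddBelow μ ν) hc

lemma W1_le_one (hdiam : ∀ x y : 𝒳, dist x y ≤ 1) (μ ν : Measure 𝒳)
    [IsProbabilityMeasure μ] [IsProbabilityMeasure ν] :
    W1 dist μ ν ≤ 1 := by
  refine (W1_le_of_mem (prod_cost_mem_Cpl hdiam μ ν)).trans ?_
  calc ∫ p, dist p.1 p.2 ∂(μ.prod ν) ≤ ∫ _p, (1:ℝ) ∂(μ.prod ν) :=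
        integral_mono (intble_dist hdiam) (integrable_const 1) (fun p => hdiam _ _)
    _ = 1 := by simp

/-- Easy direction of Kantorovich duality. -/
lemma integral_sub_integral_le_W1 (hdiam : ∀ x y : 𝒳, dist x y ≤ 1) {h : 𝒳 → ℝ}
    (hm : Measurable h)
    {Cb : ℝ} (hb : ∀ z, |h z| ≤ Cb) {L : ℝ} (hL : 0 ≤ L)
    (hLip : ∀ a b, |h a - h b| ≤ L * dist a b)
    (ν₁ ν₂ : Measure 𝒳) [IsProbabilityMeasure ν₁] [IsProbabilityMeasure ν₂] :
    ∫ z, h z ∂ν₁ - ∫ z, h z ∂ν₂ ≤ L * W1 dist ν₁ ν₂ := by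
  have key : ∀ c ∈ Cpl ν₁ ν₂, ∫ z, h z ∂ν₁ - ∫ z, h z ∂ν₂ ≤ L * c := by
    rintro c ⟨pi, hpi, h1, h2, hint, rfl⟩
    have i1 : Integrable (fun p : 𝒳 × 𝒳 => h p.1) pi :=
      intble_of_bounded ((hm.comp measurable_fst).aestronglyMeasurable) (C := Cb)
        (fun p => hb _)
    have i2 : Integrable (fun p : 𝒳 × 𝒳 => h p.2) pi :=
      intble_of_bounded ((hm.comp measurable_snd).aestronglyMeasurable) (C := Cb)
        (fun p => hb _)
    have e1 : ∫ z, h z ∂ν₁ = ∫ p, h p.1 ∂pi := by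
      rw [← h1, integral_map measurable_fst.aemeasurable hm.aestronglyMeasurable]
    have e2 : ∫ z, h z ∂ν₂ = ∫ p, h p.2 ∂pi := by
      rw [← h2, integral_map measurable_snd.aemeasurable hm.aestronglyMeasurable]
    rw [e1, e2, ← integral_sub i1 i2, ← MeasureTheory.integral_const_mul]
    refine integral_mono (i1.sub i2) (hint.const_mul L) (fun p => ?_)
    exact le_trans (le_abs_self _) (hLip p.1 p.2)
  rcases eq_or_lt_of_le hL with hL0 | hLpos
  · obtain ⟨c, hc⟩ := Cpl_nonempty hdiam ν₁ ν₂
    have := key c hc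
    rw [← hL0] at this ⊢
    simpa using this
  · have h2 : (∫ z, h z ∂ν₁ - ∫ z, h z ∂ν₂) / L ≤ W1 dist ν₁ ν₂ := by
      refine le_csInf (Cpl_nonempty hdiam ν₁ ν₂) (fun c hc => ?_)
      rw [div_le_iff₀ hLpos]
      linarith [key c hc, mul_comm L c]
    calc ∫ z, h z ∂ν₁ - ∫ z, h z ∂ν₂ = L * ((∫ z, h z ∂ν₁ - ∫ z, h z ∂ν₂) / L) := by
          field_simp
      _ ≤ L * W1 dist ν₁ ν₂ := mul_le_mul_of_nonneg_left h2 hL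

end W1aux

section Glue
variable {𝒳 : Type*} [MetricSpace 𝒳] [PolishSpace 𝒳] [Nonempty 𝒳] [MeasurableSpace 𝒳] [BorelSpace 𝒳]

/-- Gluing: one-sided triangle inequality against an explicit coupling. -/
lemma W1_le_W1_add_cost (hdiam : ∀ x y : 𝒳, dist x y ≤ 1)
    (μ ν₁ ν₂ : Measure 𝒳) [IsProbabilityMeasure μ] [IsProbabilityMeasure ν₁]
    [IsProbabilityMeasure ν₂]
    (γ : Measure (𝒳 × 𝒳)) [IsProbabilityMeasure γ]
    (hγ1 : γ.map Prod.fst = ν₁) (hγ2 : γ.map Prod.snd = ν₂) :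
    W1 dist μ ν₂ ≤ W1 dist μ ν₁ + ∫ p, dist p.1 p.2 ∂γ := by
  have key : ∀ c ∈ Cpl μ ν₁, W1 dist μ ν₂ ≤ c + ∫ p, dist p.1 p.2 ∂γ := by
    rintro c ⟨π₁, hπ₁, hm1, hm2, hint1, rfl⟩
    set ρ : Measure (𝒳 × 𝒳) := π₁.map Prod.swap with hρ
    have hρprob : IsProbabilityMeasure ρ :=
      Measure.isProbabilityMeasure_map measurable_swap.aemeasurable
    have hρfst : ρ.fst = ν₁ := by
      rw [Measure.fst, hρ, Measure.map_map measurable_fst measurable_swap]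
      exact hm2
    set K := ρ.condKernel with hKdef
    have hdis : ρ.fst ⊗ₘ K = ρ := ρ.disintegrate ρ.condKernel
    set K' : Kernel (𝒳 × 𝒳) 𝒳 := K.comap Prod.fst measurable_fst with hK'
    have hK'M : IsMarkovKernel K' := by rw [hK']; infer_instance
    set τ : Measure ((𝒳 × 𝒳) × 𝒳) := γ ⊗ₘ K' with hτ
    have hτprob : IsProbabilityMeasure τ := by rw [hτ]; infer_instance
    set π₂ : Measure (𝒳 × 𝒳) := τ.map (fun p => (p.2, p.1.2)) with hπ₂
    have hmeas2 : Measurable (fun p : (𝒳 × 𝒳) × 𝒳 => (p.2, p.1.2)) :=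
      measurable_snd.prodMk (measurable_snd.comp measurable_fst)
    have hπ₂prob : IsProbabilityMeasure π₂ :=
      Measure.isProbabilityMeasure_map hmeas2.aemeasurable
    have hτfst : τ.map Prod.fst = γ := by
      have := Measure.fst_compProd γ K'
      rwa [Measure.fst] at this
    have hμsnd : μ = ρ.map Prod.snd := by
      rw [hρ, Measure.map_map measurable_snd measurable_swap]
      exact hm1.symm
    -- first marginal of π₂ is μ
    have hmar1 : π₂.map Prod.fst = μ := by
      rw [hπ₂, Measure.map_map measurable_fst hmeas2]
      have : (Prod.fst ∘ fun p : (𝒳 × 𝒳) × 𝒳 => (p.2, p.1.2)) = Prod.snd := rfl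
      rw [this]
      ext s hs
      rw [Measure.map_apply measurable_snd hs, hτ,
        Measure.compProd_apply (measurable_snd hs)]
      have hps : ∀ p : 𝒳 × 𝒳, (Prod.mk p ⁻¹' (Prod.snd ⁻¹' s)) = s := fun p => rfl
      simp_rw [hps]
      have hlhs : ∫⁻ p : 𝒳 × 𝒳, K' p s ∂γ = ∫⁻ y, K y s ∂ν₁ := by
        rw [hK']
        simp_rw [Kernel.comap_apply]
        rw [← hγ1, lintegral_map (Kernel.measurable_coe K hs) measurable_fst]
      rw [hlhs, hμsnd, Measure.map_apply measurable_snd hs, ← hdis, hρfst,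
        Measure.compProd_apply (measurable_snd hs)]
      rfl
    -- second marginal of π₂ is ν₂
    have hmar2 : π₂.map Prod.snd = ν₂ := by
      rw [hπ₂, Measure.map_map measurable_snd hmeas2]
      have : (Prod.snd ∘ fun p : (𝒳 × 𝒳) × 𝒳 => (p.2, p.1.2))
          = Prod.snd ∘ (Prod.fst : (𝒳 × 𝒳) × 𝒳 → 𝒳 × 𝒳) := rfl
      rw [this, ← Measure.map_map measurable_snd measurable_fst, hτfst, hγ2]
    -- cost computation
    have hint2 : Integrable (fun p : 𝒳 × 𝒳 => dist p.1 p.2) π₂ := intble_dist hdiam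
    have hcost : ∫ p, dist p.1 p.2 ∂π₂ ≤ (∫ p, dist p.1 p.2 ∂π₁) + ∫ p, dist p.1 p.2 ∂γ := by
      have e0 : ∫ p, dist p.1 p.2 ∂π₂ = ∫ p : (𝒳 × 𝒳) × 𝒳, dist p.2 p.1.2 ∂τ := by
        rw [hπ₂, integral_map hmeas2.aemeasurable
          measurable_dist'.aestronglyMeasurable]
      have m1 : Measurable (fun p : (𝒳 × 𝒳) × 𝒳 => dist p.2 p.1.2) :=
        continuous_dist.measurable.comp
          ((measurable_snd.prodMk (measurable_snd.comp measurable_fst)))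
      have m2 : Measurable (fun p : (𝒳 × 𝒳) × 𝒳 => dist p.2 p.1.1) :=
        continuous_dist.measurable.comp
          ((measurable_snd.prodMk (measurable_fst.comp measurable_fst)))
      have m3 : Measurable (fun p : (𝒳 × 𝒳) × 𝒳 => dist p.1.1 p.1.2) :=
        measurable_dist'.comp measurable_fst
      have i1 : Integrable (fun p : (𝒳 × 𝒳) × 𝒳 => dist p.2 p.1.2) τ :=
        intble_of_bounded m1.aestronglyMeasurable (C := 1)
          (fun p => by rw [abs_of_nonneg dist_nonneg]; exact hdiam _ _)
      have i2 : Integrable (fun p : (𝒳 × 𝒳) × 𝒳 => dist p.2 p.1.1) τ :=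
        intble_of_bounded m2.aestronglyMeasurable (C := 1)
          (fun p => by rw [abs_of_nonneg dist_nonneg]; exact hdiam _ _)
      have i3 : Integrable (fun p : (𝒳 × 𝒳) × 𝒳 => dist p.1.1 p.1.2) τ :=
        intble_of_bounded m3.aestronglyMeasurable (C := 1)
          (fun p => by rw [abs_of_nonneg dist_nonneg]; exact hdiam _ _)
      have e1 : ∫ p : (𝒳 × 𝒳) × 𝒳, dist p.1.1 p.1.2 ∂τ = ∫ p, dist p.1 p.2 ∂γ := by
        rw [← hτfst, integral_map measurable_fst.aemeasurable
          measurable_dist'.aestronglyMeasurable]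
      have hHmeas : StronglyMeasurable (fun y : 𝒳 => ∫ z, dist z y ∂(K y)) := by
        refine MeasureTheory.StronglyMeasurable.integral_kernel_prod_right
          (κ := K) (f := fun y z => dist z y) ?_
        exact (continuous_dist.measurable.comp
          (measurable_snd.prodMk measurable_fst)).stronglyMeasurable
      have e2 : ∫ p : (𝒳 × 𝒳) × 𝒳, dist p.2 p.1.1 ∂τ = ∫ p, dist p.1 p.2 ∂π₁ := by
        rw [hτ, Measure.integral_compProd i2]
        have estep : ∀ a : 𝒳 × 𝒳, ∫ z, dist z a.1 ∂(K' a)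
            = (fun y => ∫ z, dist z y ∂(K y)) a.1 := by
          intro a; rw [hK', Kernel.comap_apply]
        simp_rw [estep]
        rw [← integral_map measurable_fst.aemeasurable hHmeas.aestronglyMeasurable, hγ1]
        have i4 : Integrable (fun q : 𝒳 × 𝒳 => dist q.2 q.1) (ν₁ ⊗ₘ K) := by
          have : IsProbabilityMeasure (ν₁ ⊗ₘ K) := by infer_instance
          exact intble_of_bounded
            ((continuous_dist.measurable.comp
              (measurable_snd.prodMk measurable_fst)).aestronglyMeasurable) (C := 1)
            (fun p => by rw [abs_of_nonneg dist_nonneg]; exact hdiam _ _)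
        rw [← Measure.integral_compProd i4]
        have : ν₁ ⊗ₘ K = ρ := by rw [← hρfst]; exact hdis
        rw [this, hρ]
        exact integral_map measurable_swap.aemeasurable
          ((continuous_dist.measurable.comp
            (measurable_snd.prodMk measurable_fst)).aestronglyMeasurable)
      calc ∫ p, dist p.1 p.2 ∂π₂ = ∫ p : (𝒳 × 𝒳) × 𝒳, dist p.2 p.1.2 ∂τ := e0
        _ ≤ ∫ p : (𝒳 × 𝒳) × 𝒳, (dist p.2 p.1.1 + dist p.1.1 p.1.2) ∂τ := by
            refine integral_mono i1 (i2.add i3) (fun p => dist_triangle _ _ _)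
        _ = (∫ p : (𝒳 × 𝒳) × 𝒳, dist p.2 p.1.1 ∂τ)
            + ∫ p : (𝒳 × 𝒳) × 𝒳, dist p.1.1 p.1.2 ∂τ := integral_add i2 i3
        _ = (∫ p, dist p.1 p.2 ∂π₁) + ∫ p, dist p.1 p.2 ∂γ := by rw [e1, e2]
    refine le_trans (W1_le_of_mem ⟨π₂, hπ₂prob, hmar1, hmar2, hint2, rfl⟩) hcost
  have h2 : W1 dist μ ν₂ - ∫ p, dist p.1 p.2 ∂γ ≤ sInf (Cpl μ ν₁) :=
    le_csInf (Cpl_nonempty hdiam μ ν₁) (fun c hc => by linarith [key c hc])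
  rw [← W1_eq] at h2
  linarith

end Glue

section Emp
variable {𝒳 : Type*} [MetricSpace 𝒳] [PolishSpace 𝒳] [Nonempty 𝒳] [MeasurableSpace 𝒳]
  [BorelSpace 𝒳]

lemma map_smul_sum {α β ι : Type*} [MeasurableSpace α] [MeasurableSpace β] (c : ENNReal)
    (s : Finset ι) (μ : ι → Measure α) {f : α → β} (hf : Measurable f) :
    (c • ∑ i ∈ s, μ i).map f = c • ∑ i ∈ s, (μ i).map f := by
  ext t ht
  simp [Measure.map_apply hf ht, Measure.smul_apply, Measure.finset_sum_apply]

/-- empirical-type measure -/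
noncomputable def empM {n : ℕ} (a : Fin n → 𝒳) : Measure 𝒳 :=
  (n : ENNReal)⁻¹ • ∑ i : Fin n, Measure.dirac (a i)

lemma empM_prob {n : ℕ} (hn : n ≠ 0) (a : Fin n → 𝒳) : IsProbabilityMeasure (empM a) := by
  constructor
  simp only [empM, Measure.smul_apply, Measure.finset_sum_apply, measure_univ,
    Finset.sum_const, Finset.card_univ, Fintype.card_fin, nsmul_eq_mul, mul_one, smul_eq_mul]
  rw [ENNReal.inv_mul_cancel (by exact_mod_cast hn) (by simp)]

lemma emp_coupling {n : ℕ} (hn : n ≠ 0) (hdiam : ∀ x y : 𝒳, dist x y ≤ 1)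
    (a b : Fin n → 𝒳) :
    ((n:ℝ)⁻¹ * ∑ i : Fin n, dist (a i) (b i)) ∈ Cpl (empM a) (empM b) := by
  set pi : Measure (𝒳 × 𝒳) := (n : ENNReal)⁻¹ • ∑ i : Fin n, Measure.dirac (a i, b i)
    with hpi
  have hpiprob : IsProbabilityMeasure pi := by
    constructor
    simp only [hpi, Measure.smul_apply, Measure.finset_sum_apply, measure_univ,
      Finset.sum_const, Finset.card_univ, Fintype.card_fin, nsmul_eq_mul, mul_one, smul_eq_mul]
    rw [ENNReal.inv_mul_cancel (by exact_mod_cast hn) (by simp)]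
  have h1 : pi.map Prod.fst = empM a := by
    rw [hpi, map_smul_sum _ _ _ measurable_fst, empM]
    simp [Measure.map_dirac' measurable_fst]
  have h2 : pi.map Prod.snd = empM b := by
    rw [hpi, map_smul_sum _ _ _ measurable_snd, empM]
    simp [Measure.map_dirac' measurable_snd]
  have hint : Integrable (fun p : 𝒳 × 𝒳 => dist p.1 p.2) pi := intble_dist hdiam
  have hcost : ∫ p, dist p.1 p.2 ∂pi = (n:ℝ)⁻¹ * ∑ i : Fin n, dist (a i) (b i) := by
    rw [hpi, integral_smul_measure, integral_finset_sum_measure (fun i _ =>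
      intble_of_bounded measurable_dist'.aestronglyMeasurable (C := 1)
        (fun p => by rw [abs_of_nonneg dist_nonneg]; exact hdiam _ _))]
    simp [integral_dirac, ENNReal.toReal_inv, smul_eq_mul]
  exact ⟨pi, hpiprob, h1, h2, hint, hcost.symm⟩

lemma abs_W1_empM_sub_le {n : ℕ} (hn : n ≠ 0) (hdiam : ∀ x y : 𝒳, dist x y ≤ 1)
    (μ : Measure 𝒳) [IsProbabilityMeasure μ] (a b : Fin n → 𝒳) :
    |W1 dist μ (empM a) - W1 dist μ (empM b)|
      ≤ (n:ℝ)⁻¹ * ∑ i : Fin n, dist (a i) (b i) := by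
  have ha := empM_prob hn a
  have hb := empM_prob hn b
  rw [abs_sub_le_iff]
  constructor
  · obtain ⟨pi, hp, h1, h2, hint, hc⟩ := emp_coupling hn hdiam b a
    have := W1_le_W1_add_cost hdiam μ (empM b) (empM a) pi h1 h2
    rw [← hc] at this
    have hsym : ∑ i : Fin n, dist (b i) (a i) = ∑ i : Fin n, dist (a i) (b i) := by
      simp [dist_comm]
    linarith [hsym ▸ this]
  · obtain ⟨pi, hp, h1, h2, hint, hc⟩ := emp_coupling hn hdiam a b
    have := W1_le_W1_add_cost hdiam μ (empM a) (empM b) pi h1 h2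
    rw [← hc] at this
    linarith

end Emp

section Traj
variable {β : Type*} [MeasurableSpace β]

lemma measurable_snoc' (m : ℕ) :
    Measurable (fun p : (Fin (m + 1) → β) × β => (Fin.snoc p.1 p.2 : Fin (m + 2) → β)) := by
  refine measurable_pi_lambda _ (fun j => ?_)
  refine Fin.lastCases ?_ (fun i => ?_) j
  · simpa [Fin.snoc_last] using (measurable_snd : Measurable fun p : (Fin (m+1) → β) × β => p.2)
  · simpa [Fin.snoc_castSucc] using (measurable_fst.eval :
      Measurable fun c : (Fin (m+1) → β) × β => c.1 i)

/-- the one-step "append" kernel -/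
noncomputable def snocK (P : Kernel β β) (m : ℕ) :
    Kernel (Fin (m + 1) → β) (Fin (m + 2) → β) :=
  Kernel.map (Kernel.id ×ₖ P.comap (fun v => v (Fin.last m)) (measurable_pi_apply _))
    (fun p => Fin.snoc p.1 p.2)

instance (P : Kernel β β) [IsMarkovKernel P] (m : ℕ) : IsMarkovKernel (snocK P m) :=
  Kernel.IsMarkovKernel.map _ (measurable_snoc' m)

lemma snocK_apply (P : Kernel β β) [IsMarkovKernel P] (m : ℕ) (v : Fin (m + 1) → β) :
    snocK P m v = (P (v (Fin.last m))).map (fun y => Fin.snoc v y) := by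
  rw [snocK, Kernel.map_apply _ (measurable_snoc' m), Kernel.prod_apply, Kernel.id_apply,
    Kernel.comap_apply, Measure.dirac_prod,
    Measure.map_map (measurable_snoc' m) measurable_prodMk_left]
  rfl

lemma traj_succ (P : Kernel β β) [IsMarkovKernel P] (m : ℕ) (x : β) :
    trajMeasure P (m + 1) x = (trajMeasure P m x).bind (snocK P m) := by
  rw [trajMeasure]
  congr 1
  funext v
  exact (snocK_apply P m v).symm

instance traj_prob (P : Kernel β β) [IsMarkovKernel P] (m : ℕ) (x : β) :
    IsProbabilityMeasure (trajMeasure P m x) := by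
  induction m with
  | zero => rw [trajMeasure]; infer_instance
  | succ m ih =>
    rw [traj_succ]
    constructor
    rw [Measure.bind_apply MeasurableSet.univ (snocK P m).measurable.aemeasurable]
    simp [measure_univ]

/-- integral against a bind of a Markov kernel -/
lemma integral_bind' {α γ : Type*} [MeasurableSpace α] [MeasurableSpace γ]
    (μ : Measure α) [IsProbabilityMeasure μ] (κ : Kernel α γ) [IsMarkovKernel κ]
    {f : γ → ℝ} (hf : Measurable f) {C : ℝ} (hC : ∀ b, |f b| ≤ C) :
    ∫ b, f b ∂(μ.bind κ) = ∫ a, ∫ b, f b ∂(κ a) ∂μ := by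
  have hbind : μ.bind ⇑κ = (μ ⊗ₘ κ).map Prod.snd := by
    ext s hs
    rw [Measure.bind_apply hs (κ.measurable.aemeasurable), Measure.map_apply measurable_snd hs,
      Measure.compProd_apply (measurable_snd hs)]
    rfl
  rw [hbind, integral_map measurable_snd.aemeasurable hf.aestronglyMeasurable]
  exact Measure.integral_compProd (f := fun p : α × γ => f p.2) (intble_of_bounded
      ((hf.comp measurable_snd).aestronglyMeasurable) (C := C) (fun p => hC _))

end Traj

section Key
variable {𝒳 : Type*} [MetricSpace 𝒳] [PolishSpace 𝒳] [Nonempty 𝒳] [MeasurableSpace 𝒳]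
  [BorelSpace 𝒳]

lemma abs_int_le {α : Type*} [MeasurableSpace α] (ν : Measure α) (f : α → ℝ) :
    |∫ a, f a ∂ν| ≤ ∫ a, |f a| ∂ν := by
  simpa [Real.norm_eq_abs] using norm_integral_le_integral_norm (μ := ν) f

lemma key_induction (hdiam : ∀ x y : 𝒳, dist x y ≤ 1)
    (P : Kernel 𝒳 𝒳) [IsMarkovKernel P] (κ : ℝ) (hκ0 : 0 ≤ κ)
    (hcontr : ∀ x y : 𝒳, W1 dist (P x) (P y) ≤ κ * dist x y) :
    ∀ (m : ℕ) (g : (Fin (m + 1) → 𝒳) → ℝ) (L : ℕ → ℝ), (∀ j, 0 ≤ L j) →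
    Measurable g → (∀ v, |g v| ≤ 1) →
    (∀ v w, |g v - g w| ≤ ∑ j : Fin (m + 1), L (j : ℕ) * dist (v j) (w j)) →
    ∀ x y : 𝒳, |(∫ v, g v ∂trajMeasure P m x) - ∫ v, g v ∂trajMeasure P m y|
      ≤ (∑ j ∈ Finset.range (m + 1), L j * κ ^ j) * dist x y := by
  intro m
  induction m with
  | zero =>
    intro g L hL hgm hgb hgLip x y
    have e : ∀ z : 𝒳, ∫ v, g v ∂trajMeasure P 0 z = g (fun _ => z) := by
      intro z
      show ∫ v, g v ∂(Measure.dirac (fun _ => z)) = g (fun _ => z)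
      exact integral_dirac' g _ hgm.stronglyMeasurable
    rw [e x, e y]
    refine le_trans (hgLip _ _) ?_
    simp [Finset.sum_range_succ]
  | succ m ih =>
    intro g L hL hgm hgb hgLip x y
    -- the conditioned function
    set g' : (Fin (m + 1) → 𝒳) → ℝ :=
      fun v => ∫ z, g (Fin.snoc v z) ∂(P (v (Fin.last m))) with hg'
    have hsnocm : ∀ w : Fin (m + 1) → 𝒳, Measurable (fun z : 𝒳 => (Fin.snoc w z : Fin (m+2) → 𝒳)) :=
      fun w => (measurable_snoc' m).comp measurable_prodMk_left
    have hg'm : Measurable g' := by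
      have : StronglyMeasurable (fun v : Fin (m + 1) → 𝒳 =>
          ∫ z, g (Fin.snoc v z) ∂((P.comap (fun v : Fin (m+1) → 𝒳 => v (Fin.last m))
            (measurable_pi_apply _)) v)) := by
        refine MeasureTheory.StronglyMeasurable.integral_kernel_prod_right
          (f := fun v z => g (Fin.snoc v z)) ?_
        exact (hgm.comp (measurable_snoc' m)).stronglyMeasurable
      simp_rw [Kernel.comap_apply] at this
      exact this.measurable
    have hg'b : ∀ v, |g' v| ≤ 1 := by
      intro v
      rw [hg']
      calc |∫ z, g (Fin.snoc v z) ∂(P (v (Fin.last m)))|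
          ≤ ∫ _z, (1:ℝ) ∂(P (v (Fin.last m))) := by
            refine (abs_int_le _ _).trans ?_
            refine integral_mono ?_ (integrable_const 1) (fun z => hgb _)
            exact (intble_of_bounded ((hgm.comp (hsnocm v)).aestronglyMeasurable)
              (C := 1) (fun z => hgb _)).abs
        _ = 1 := by simp
    -- Lipschitz property of g'
    set L' : ℕ → ℝ := fun j => L j + (if j = m then κ * L (m + 1) else 0) with hL'
    have hL'0 : ∀ j, 0 ≤ L' j := by
      intro j
      rw [hL']
      have h1 : (0:ℝ) ≤ if j = m then κ * L (m + 1) else 0 := by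
        split
        · exact mul_nonneg hκ0 (hL _)
        · exact le_refl 0
      exact add_nonneg (hL j) h1
    have hsnocsum : ∀ (v w : Fin (m+1) → 𝒳) (z z' : 𝒳),
        ∑ j : Fin (m + 2), L (j : ℕ) * dist ((Fin.snoc v z : Fin (m+2) → 𝒳) j) ((Fin.snoc w z' : Fin (m+2) → 𝒳) j)
          = (∑ j : Fin (m + 1), L (j : ℕ) * dist (v j) (w j)) + L (m+1) * dist z z' := by
      intro v w z z'
      rw [Fin.sum_univ_castSucc]
      simp [Fin.snoc_castSucc, Fin.snoc_last]
    have hg'Lip : ∀ v w, |g' v - g' w| ≤ ∑ j : Fin (m + 1), L' (j : ℕ) * dist (v j) (w j) := by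
      intro v w
      have hiv : Integrable (fun z => g (Fin.snoc v z)) (P (v (Fin.last m))) :=
        intble_of_bounded ((hgm.comp (hsnocm v)).aestronglyMeasurable)
          (C := 1) (fun z => hgb _)
      have hiw : Integrable (fun z => g (Fin.snoc w z)) (P (v (Fin.last m))) :=
        intble_of_bounded ((hgm.comp (hsnocm w)).aestronglyMeasurable)
          (C := 1) (fun z => hgb _)
      set A : ℝ := ∫ z, (g (Fin.snoc v z) - g (Fin.snoc w z)) ∂(P (v (Fin.last m))) with hA
      set B : ℝ := (∫ z, g (Fin.snoc w z) ∂(P (v (Fin.last m))))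
        - ∫ z, g (Fin.snoc w z) ∂(P (w (Fin.last m))) with hB
      have hsplit : g' v - g' w = A + B := by
        rw [hg', hA, hB, integral_sub hiv hiw]
        ring
      have hAbound : |A| ≤ ∑ j : Fin (m + 1), L (j : ℕ) * dist (v j) (w j) := by
        rw [hA]
        calc |∫ z, (g (Fin.snoc v z) - g (Fin.snoc w z)) ∂(P (v (Fin.last m)))|
            ≤ ∫ z, |g (Fin.snoc v z) - g (Fin.snoc w z)| ∂(P (v (Fin.last m))) :=
              abs_int_le _ _
          _ ≤ ∫ _z, (∑ j : Fin (m + 1), L (j : ℕ) * dist (v j) (w j)) ∂(P (v (Fin.last m))) := by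
              refine integral_mono (hiv.sub hiw).abs (integrable_const _) (fun z => ?_)
              refine (hgLip _ _).trans ?_
              rw [hsnocsum v w z z]
              simp
          _ = ∑ j : Fin (m + 1), L (j : ℕ) * dist (v j) (w j) := by simp
      have hwLip : ∀ z z' : 𝒳, |g (Fin.snoc w z) - g (Fin.snoc w z')| ≤ L (m+1) * dist z z' := by
        intro z z'
        refine (hgLip _ _).trans ?_
        rw [hsnocsum w w z z']
        simp
      have hBbound : |B| ≤ L (m + 1) * (κ * dist (v (Fin.last m)) (w (Fin.last m))) := by
        rw [hB, abs_sub_le_iff]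
        constructor
        · refine (integral_sub_integral_le_W1 hdiam (hgm.comp (hsnocm w))
            (Cb := 1) (fun z => hgb _) (hL (m+1)) hwLip _ _).trans ?_
          exact mul_le_mul_of_nonneg_left (hcontr _ _) (hL (m+1))
        · refine (integral_sub_integral_le_W1 hdiam (hgm.comp (hsnocm w))
            (Cb := 1) (fun z => hgb _) (hL (m+1)) hwLip _ _).trans ?_
          refine mul_le_mul_of_nonneg_left ((hcontr _ _).trans ?_) (hL (m+1))
          rw [dist_comm]
      have hsum : (∑ j : Fin (m + 1), L (j : ℕ) * dist (v j) (w j))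
          + L (m + 1) * (κ * dist (v (Fin.last m)) (w (Fin.last m)))
          = ∑ j : Fin (m + 1), L' (j : ℕ) * dist (v j) (w j) := by
        simp only [hL', add_mul]
        rw [Finset.sum_add_distrib]
        congr 1
        rw [Fin.sum_univ_castSucc]
        have h0 : ∀ i : Fin m, ((i.castSucc : Fin (m+1)) : ℕ) ≠ m :=
          fun i => by simp [Fin.castSucc]; omega
        have : ∀ i : Fin m,
            (if ((i.castSucc : Fin (m+1)) : ℕ) = m then κ * L (m + 1) else 0)
              * dist (v i.castSucc) (w i.castSucc) = 0 := by
          intro i; rw [if_neg (h0 i)]; ring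
        simp only [this, Finset.sum_const_zero, zero_add]
        simp [Fin.last]
        ring
      calc |g' v - g' w| = |A + B| := by rw [hsplit]
        _ ≤ |A| + |B| := abs_add_le _ _
        _ ≤ ∑ j : Fin (m + 1), L' (j : ℕ) * dist (v j) (w j) := by
            rw [← hsum]; exact add_le_add hAbound hBbound
    -- rewrite the integrals via g'
    have hrw : ∀ z : 𝒳, ∫ v, g v ∂trajMeasure P (m + 1) z = ∫ v, g' v ∂trajMeasure P m z := by
      intro z
      rw [traj_succ, integral_bind' (trajMeasure P m z) (snocK P m) hgm (C := 1) hgb]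
      refine integral_congr_ae (Filter.Eventually.of_forall (fun v => ?_))
      show ∫ b, g b ∂(snocK P m v) = g' v
      rw [snocK_apply P m v, integral_map (hsnocm v).aemeasurable hgm.aestronglyMeasurable]
    rw [hrw x, hrw y]
    refine (ih g' L' hL'0 hg'm hg'b hg'Lip x y).trans ?_
    refine mul_le_mul_of_nonneg_right (le_of_eq ?_) dist_nonneg
    rw [Finset.sum_range_succ (fun j => L j * κ ^ j), Finset.sum_range_succ (fun j => L j * κ ^ j)]
    rw [show (∑ j ∈ Finset.range (m + 1), L' j * κ ^ j)
        = ∑ j ∈ Finset.range (m + 1), (L j * κ ^ j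
          + (if j = m then κ * L (m + 1) else 0) * κ ^ j) from by
      refine Finset.sum_congr rfl (fun j _ => ?_); rw [hL']; ring]
    rw [Finset.sum_add_distrib]
    have : ∑ j ∈ Finset.range (m + 1), (if j = m then κ * L (m + 1) else 0) * κ ^ j
        = κ * L (m + 1) * κ ^ m := by
      rw [Finset.sum_eq_single m]
      · simp
      · intro b _ hb; rw [if_neg hb]; ring
      · intro h; exact absurd (Finset.self_mem_range_succ m) h
    rw [this, Finset.sum_range_succ (fun j => L j * κ ^ j)]
    ring

end Key


/-- **Lemma (bounded differences for the empirical Wasserstein distance).** For a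
`W₁`-contracting Markov chain on a Polish space of diameter at most 1 with invariant
measure `μ`, the martingale differences `Δ_k` of `f(x₁, …, x_n) = W₁(μ, n⁻¹ ∑ δ_{x_k})`
satisfy, by the Markov property (`Δ_k(…, x) - Δ_k(…, y)` being
`E^x f(x₁, …, x_{k-1}, x, X₁, …, X_{n-k}) - E^y f(x₁, …, x_{k-1}, y, X₁, …, X_{n-k})`):
`|Δ_k(x₁,…,x_{k-1},x) - Δ_k(x₁,…,x_{k-1},y)| ≤ n⁻¹ (∑_{j=0}^{n-k} κ^j) d(x,y)
  ≤ d(x,y)/(n(1-κ))`. -/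
theorem bounded_differences_empirical_wasserstein
    {𝒳 : Type*} [MetricSpace 𝒳] [PolishSpace 𝒳] [MeasurableSpace 𝒳] [BorelSpace 𝒳]
    (hdiam : ∀ x y : 𝒳, dist x y ≤ 1)
    (P : Kernel 𝒳 𝒳) [IsMarkovKernel P]
    (κ : ℝ) (hκ : κ ∈ Set.Ioo (0 : ℝ) 1)
    (hcontr : ∀ x y : 𝒳, W1 dist (P x) (P y) ≤ κ * dist x y)
    (μ : Measure 𝒳) [IsProbabilityMeasure μ] (hinv : μ.bind P = μ)
    (n k : ℕ) (hk1 : 1 ≤ k) (hk2 : k ≤ n)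
    (pre : Fin (k - 1) → 𝒳) (x y : 𝒳) :
    |(∫ v : Fin ((n - k) + 1) → 𝒳,
          W1 dist μ ((n : ENNReal)⁻¹ • ∑ i : Fin n, Measure.dirac
            (if h : (i : ℕ) < k - 1 then pre ⟨i, h⟩ else v ⟨(i : ℕ) - (k - 1), by omega⟩))
          ∂(trajMeasure P (n - k) x)) -
        ∫ v : Fin ((n - k) + 1) → 𝒳,
          W1 dist μ ((n : ENNReal)⁻¹ • ∑ i : Fin n, Measure.dirac
            (if h : (i : ℕ) < k - 1 then pre ⟨i, h⟩ else v ⟨(i : ℕ) - (k - 1), by omega⟩))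
          ∂(trajMeasure P (n - k) y)|
      ≤ (n : ℝ)⁻¹ * (∑ j ∈ Finset.range ((n - k) + 1), κ ^ j) * dist x y ∧
    (n : ℝ)⁻¹ * (∑ j ∈ Finset.range ((n - k) + 1), κ ^ j) * dist x y
      ≤ dist x y / (n * (1 - κ)) := by
  have hxne : Nonempty 𝒳 := ⟨x⟩
  have hn : n ≠ 0 := by omega
  have hnR : (0:ℝ) < (n:ℝ) := by exact_mod_cast Nat.pos_of_ne_zero hn
  set m := n - k with hm
  -- the point-assignment map
  set A : (Fin (m + 1) → 𝒳) → Fin n → 𝒳 := fun v i =>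
    if h : (i : ℕ) < k - 1 then pre ⟨i, h⟩ else v ⟨(i : ℕ) - (k - 1), by omega⟩ with hA
  set g : (Fin (m + 1) → 𝒳) → ℝ := fun v => W1 dist μ (empM (A v)) with hg
  -- Lipschitz estimate for g
  have hsum_eq : ∀ v w : Fin (m + 1) → 𝒳,
      ∑ i : Fin n, dist (A v i) (A w i) = ∑ j : Fin (m + 1), dist (v j) (w j) := by
    intro v w
    set G : ℕ → ℝ := fun i => if h2 : i < m + 1 then dist (v ⟨i, h2⟩) (w ⟨i, h2⟩) else 0
      with hG
    set F : ℕ → ℝ := fun i => if i < k - 1 then 0 else G (i - (k - 1)) with hF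
    have h1 : ∀ i : Fin n, dist (A v i) (A w i) = F (i : ℕ) := by
      intro i
      rw [hA, hF]
      by_cases h : (i : ℕ) < k - 1
      · simp only [dif_pos h, if_pos h, dist_self]
      · have h2 : (i : ℕ) - (k - 1) < m + 1 := by omega
        simp only [dif_neg h, if_neg h, hG, dif_pos h2]
    calc ∑ i : Fin n, dist (A v i) (A w i) = ∑ i : Fin n, F (i : ℕ) :=
          Finset.sum_congr rfl (fun i _ => h1 i)
      _ = ∑ i ∈ Finset.range n, F i := Fin.sum_univ_eq_sum_range F n
      _ = (∑ i ∈ Finset.range (k - 1), F i) + ∑ i ∈ Finset.Ico (k - 1) n, F i :=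
          (Finset.sum_range_add_sum_Ico F (by omega)).symm
      _ = 0 + ∑ i ∈ Finset.Ico (k - 1) n, F i := by
          congr 1
          refine Finset.sum_eq_zero (fun i hi => ?_)
          rw [hF]
          exact if_pos (Finset.mem_range.mp hi)
      _ = ∑ i ∈ Finset.range (n - (k - 1)), F ((k - 1) + i) := by
          rw [zero_add, Finset.sum_Ico_eq_sum_range]
      _ = ∑ i ∈ Finset.range (m + 1), G i := by
          have hc : n - (k - 1) = m + 1 := by omega
          rw [hc]
          refine Finset.sum_congr rfl (fun i _ => ?_)
          show (if k - 1 + i < k - 1 then 0 else G (k - 1 + i - (k - 1))) = G i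
          rw [if_neg (by omega)]
          congr 1
          omega
      _ = ∑ j : Fin (m + 1), dist (v j) (w j) := by
          rw [← Fin.sum_univ_eq_sum_range G (m + 1)]
          refine Finset.sum_congr rfl (fun j _ => ?_)
          rw [hG]
          simp only [Fin.is_lt, dif_pos, Fin.eta]
  have hprob : ∀ v : Fin (m + 1) → 𝒳, IsProbabilityMeasure (empM (A v)) :=
    fun v => empM_prob hn (A v)
  have hgLip : ∀ v w : Fin (m + 1) → 𝒳,
      |g v - g w| ≤ ∑ j : Fin (m + 1), (n:ℝ)⁻¹ * dist (v j) (w j) := by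
    intro v w
    have := abs_W1_empM_sub_le hn hdiam μ (A v) (A w)
    rw [hsum_eq v w, Finset.mul_sum] at this
    exact this
  have hgm : Measurable g := by
    have hlip : LipschitzWith (((m:NNReal) + 1) * (n:NNReal)⁻¹) g := by
      refine LipschitzWith.of_dist_le_mul (fun v w => ?_)
      rw [Real.dist_eq]
      refine (hgLip v w).trans ?_
      have hterm : ∀ j : Fin (m + 1), (n:ℝ)⁻¹ * dist (v j) (w j) ≤ (n:ℝ)⁻¹ * dist v w :=
        fun j => mul_le_mul_of_nonneg_left (dist_le_pi_dist v w j) (by positivity)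
      refine (Finset.sum_le_sum (fun j _ => hterm j)).trans ?_
      rw [Finset.sum_const, Finset.card_univ]
      simp only [Fintype.card_fin, nsmul_eq_mul]
      push_cast
      ring_nf
      exact le_refl _
    exact hlip.continuous.measurable
  have hgb : ∀ v, |g v| ≤ 1 := by
    intro v
    have h0 := hprob v
    rw [abs_le]
    exact ⟨by linarith [W1_nonneg hdiam μ (empM (A v))], W1_le_one hdiam μ (empM (A v))⟩
  have main := key_induction hdiam P κ hκ.1.le hcontr m g
    (fun _ => (n:ℝ)⁻¹) (fun _j => inv_nonneg.mpr hnR.le) hgm hgb hgLip x y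
  have hsum2 : (∑ j ∈ Finset.range (m + 1), (n:ℝ)⁻¹ * κ ^ j)
      = (n:ℝ)⁻¹ * ∑ j ∈ Finset.range (m + 1), κ ^ j := (Finset.mul_sum _ _ _).symm
  rw [hsum2] at main
  constructor
  · exact main
  · -- geometric bound
    have hκ1 : κ ≠ 1 := ne_of_lt hκ.2
    have hgeom : ∑ j ∈ Finset.range (m + 1), κ ^ j ≤ (1 - κ)⁻¹ := by
      rw [geom_sum_eq hκ1, div_le_iff_of_neg (by linarith [hκ.2] : κ - 1 < 0)]
      have hpow : (0:ℝ) ≤ κ ^ (m + 1) := pow_nonneg hκ.1.le _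
      have hne : (1:ℝ) - κ ≠ 0 := by
        have := hκ.2; intro hc; rw [sub_eq_zero] at hc; exact hκ1 hc.symm
      have he : (1 - κ)⁻¹ * (κ - 1) = -1 := by
        rw [inv_mul_eq_div, div_eq_iff hne]; ring
      nlinarith [he]
    have h1κ : (0:ℝ) < 1 - κ := by linarith [hκ.2]
    have hS0 : (0:ℝ) ≤ ∑ j ∈ Finset.range (m + 1), κ ^ j :=
      Finset.sum_nonneg (fun j _ => pow_nonneg hκ.1.le j)
    calc (n : ℝ)⁻¹ * (∑ j ∈ Finset.range (m + 1), κ ^ j) * dist x y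
        ≤ (n : ℝ)⁻¹ * (1 - κ)⁻¹ * dist x y := by
          refine mul_le_mul_of_nonneg_right ?_ dist_nonneg
          exact mul_le_mul_of_nonneg_left hgeom (by positivity)
      _ = dist x y / (n * (1 - κ)) := by
          rw [div_eq_mul_inv, mul_inv, mul_comm ((n:ℝ)⁻¹) ((1-κ)⁻¹)]
          ring
end
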